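/- arXiv:1602.05205 — 5 statements merged into one kernel-verified Lean document; each statement's English description precedes it below -/
import Mathlib

section
/- Let f : ℝ^d → ℝ be a closed convex function. Then f is μ-strongly convex with respect to a norm ‖·‖ (with μ > 0) if and only if its convex conjugate f* is (1/μ)-smooth with respect to the dual norm ‖·‖*. -/
open scoped BigOperators ENNReal
open MeasureTheory

set_option maxHeartbeats 1000000

noncomputable section

abbrev Euc (n : ℕ) := EuclideanSpace ℝ (Fin n)

/-- `N` is a norm on `ℝ^n`. -/
def IsNorm {n : ℕ} (N : Euc n → ℝ) : Prop :=
  (∀ x, 0 ≤ N x) ∧ (∀ x, N x = 0 ↔ x = 0) ∧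
  (∀ (c : ℝ) (x), N (c • x) = |c| * N x) ∧
  (∀ x y, N (x + y) ≤ N x + N y)

/-- The dual norm `‖v‖_* = sup_{N u ≤ 1} ⟨v,u⟩`. -/
noncomputable def dualNorm {n : ℕ} (N : Euc n → ℝ) (v : Euc n) : ℝ :=
  sSup {r : ℝ | ∃ u, N u ≤ 1 ∧ r = (inner ℝ v u : ℝ)}

/-- Convex (Fenchel) conjugate of an `ℝ ∪ {+∞}`-valued function. -/
noncomputable def econj {n : ℕ} (g : Euc n → EReal) (v : Euc n) : EReal :=
  ⨆ u : Euc n, ((inner ℝ v u : ℝ) : EReal) - g u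

/-- Properness: never `-∞`, finite somewhere. -/
def EProper {n : ℕ} (g : Euc n → EReal) : Prop :=
  (∀ x, g x ≠ ⊥) ∧ ∃ x, g x ≠ ⊤

/-- Convexity of an extended-real-valued function. -/
def EConvex {n : ℕ} (g : Euc n → EReal) : Prop :=
  ∀ x y (a b : ℝ), 0 ≤ a → 0 ≤ b → a + b = 1 →
    g (a • x + b • y) ≤ (a : EReal) * g x + (b : EReal) * g y

/-- `u` is a subgradient of `g` at `x`. -/
def ESubgradAt {n : ℕ} (g : Euc n → EReal) (x u : Euc n) : Prop :=
  ∀ y, g x + ((inner ℝ u (y - x) : ℝ) : EReal) ≤ g y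

/-- `u` is a subgradient of a real-valued `f` at `x`. -/
def RSubgradAt {n : ℕ} (f : Euc n → ℝ) (x u : Euc n) : Prop :=
  ∀ y, f x + (inner ℝ u (y - x) : ℝ) ≤ f y

/-- One-dimensional convex conjugate. -/
noncomputable def econj1 (g : ℝ → EReal) (x : ℝ) : EReal :=
  ⨆ a : ℝ, ((x * a : ℝ) : EReal) - g a

def EProper1 (g : ℝ → EReal) : Prop := (∀ x, g x ≠ ⊥) ∧ ∃ x, g x ≠ ⊤

def EConvex1 (g : ℝ → EReal) : Prop :=
  ∀ x y (a b : ℝ), 0 ≤ a → 0 ≤ b → a + b = 1 →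
    g (a * x + b * y) ≤ (a : EReal) * g x + (b : EReal) * g y

def ESubgradAt1 (g : ℝ → EReal) (x u : ℝ) : Prop :=
  ∀ y, g x + ((u * (y - x) : ℝ) : EReal) ≤ g y

/-- Map a nonnegative extended real to `ℝ≥0∞` (junk on negatives). -/
noncomputable def toe (x : EReal) : ℝ≥0∞ :=
  if x = ⊤ then ⊤ else ENNReal.ofReal x.toReal


namespace SCaux


variable {d : ℕ} {N : Euc d → ℝ}

lemma N_zero (hN : IsNorm N) : N 0 = 0 := by
  have := hN.2.2.1 0 0
  simpa using this

lemma N_neg (hN : IsNorm N) (x : Euc d) : N (-x) = N x := by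
  have := hN.2.2.1 (-1) x
  simpa using this

lemma abs_coord_le (x : Euc d) (i : Fin d) : |x i| ≤ ‖x‖ := by
  have h1 : (inner ℝ (EuclideanSpace.single i (1:ℝ)) x : ℝ) = x i := by
    simp [EuclideanSpace.inner_single_left]
  have h2 := abs_real_inner_le_norm (EuclideanSpace.single i (1:ℝ)) x
  rw [h1] at h2
  simpa using h2

lemma N_sum_le (hN : IsNorm N) {ι : Type*} (s : Finset ι) (g : ι → Euc d) :
    N (∑ i ∈ s, g i) ≤ ∑ i ∈ s, N (g i) := by
  classical
  induction s using Finset.cons_induction with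
  | empty => simp [N_zero hN]
  | cons a s ha ih =>
    rw [Finset.sum_cons, Finset.sum_cons]
    exact le_trans (hN.2.2.2 _ _) (by linarith)

lemma exists_upper (hN : IsNorm N) : ∃ b : ℝ, 0 < b ∧ ∀ x, N x ≤ b * ‖x‖ := by
  classical
  set b : ℝ := (∑ i : Fin d, N (EuclideanSpace.single i (1:ℝ))) + 1 with hb
  refine ⟨b, ?_, ?_⟩
  · have : 0 ≤ ∑ i : Fin d, N (EuclideanSpace.single i (1:ℝ)) :=
      Finset.sum_nonneg fun i _ => hN.1 _
    linarith
  · intro x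
    have hx : x = ∑ i : Fin d, x i • EuclideanSpace.single i (1:ℝ) := by
      have := (EuclideanSpace.basisFun (Fin d) ℝ).sum_repr x
      simpa [EuclideanSpace.basisFun_apply, EuclideanSpace.basisFun_repr] using this.symm
    calc N x = N (∑ i : Fin d, x i • EuclideanSpace.single i (1:ℝ)) := by rw [← hx]
    _ ≤ ∑ i : Fin d, N (x i • EuclideanSpace.single i (1:ℝ)) := N_sum_le hN _ _
    _ = ∑ i : Fin d, |x i| * N (EuclideanSpace.single i (1:ℝ)) := by
        simp [hN.2.2.1]
    _ ≤ ∑ i : Fin d, ‖x‖ * N (EuclideanSpace.single i (1:ℝ)) := by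
        refine Finset.sum_le_sum fun i _ => ?_
        exact mul_le_mul_of_nonneg_right (abs_coord_le x i) (hN.1 _)
    _ = (∑ i : Fin d, N (EuclideanSpace.single i (1:ℝ))) * ‖x‖ := by
        rw [Finset.sum_mul]
        exact Finset.sum_congr rfl fun i _ => mul_comm _ _
    _ ≤ b * ‖x‖ := by
        have : 0 ≤ ‖x‖ := norm_nonneg x
        nlinarith

lemma N_continuous (hN : IsNorm N) : Continuous N := by
  obtain ⟨b, hb, hub⟩ := exists_upper hN
  rw [Metric.continuous_iff]
  intro x ε hε
  refine ⟨ε / b, by positivity, fun y hy => ?_⟩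
  have h1 : N y ≤ N x + N (y - x) := by
    have := hN.2.2.2 x (y - x); simpa using this
  have h2 : N x ≤ N y + N (y - x) := by
    have := hN.2.2.2 y (x - y)
    have hxy : N (x - y) = N (y - x) := by
      rw [← N_neg hN (x - y)]; congr 1; abel
    rw [hxy] at this
    simpa using this
  have h3 : N (y - x) ≤ b * ‖y - x‖ := hub _
  have h4 : ‖y - x‖ < ε / b := by rwa [← dist_eq_norm]
  have : N (y - x) < ε := by
    calc N (y - x) ≤ b * ‖y - x‖ := h3
    _ < b * (ε / b) := by exact mul_lt_mul_of_pos_left h4 hb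
    _ = ε := by field_simp
  rw [Real.dist_eq]
  rw [abs_lt]
  constructor <;> linarith

lemma exists_lower (hN : IsNorm N) : ∃ a : ℝ, 0 < a ∧ ∀ x, a * ‖x‖ ≤ N x := by
  by_cases h : ∃ x : Euc d, x ≠ 0
  · obtain ⟨x₀, hx₀⟩ := h
    have hsph : (Metric.sphere (0 : Euc d) 1).Nonempty := by
      refine ⟨‖x₀‖⁻¹ • x₀, ?_⟩
      simp [norm_smul, norm_ne_zero_iff.2 hx₀, abs_inv,
        inv_mul_cancel₀ (norm_ne_zero_iff.2 hx₀)]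
    obtain ⟨z, hz, hmin⟩ := (isCompact_sphere (0 : Euc d) 1).exists_isMinOn hsph
      (N_continuous hN).continuousOn
    have hz1 : ‖z‖ = 1 := by simpa using hz
    have hzne : z ≠ 0 := by intro h; rw [h] at hz1; simp at hz1
    have hNz : 0 < N z := by
      rcases lt_or_eq_of_le (hN.1 z) with h' | h'
      · exact h'
      · exact absurd ((hN.2.1 z).1 h'.symm) hzne
    refine ⟨N z, hNz, fun x => ?_⟩
    rcases eq_or_ne x 0 with rfl | hx
    · simp [N_zero hN]
    · have hnx : (0:ℝ) < ‖x‖ := norm_pos_iff.2 hx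
      have hmem : ‖x‖⁻¹ • x ∈ Metric.sphere (0 : Euc d) 1 := by
        simp [norm_smul, abs_inv, inv_mul_cancel₀ hnx.ne']
      have := hmin hmem
      have h1 : N z ≤ N (‖x‖⁻¹ • x) := this
      have h2 : N (‖x‖⁻¹ • x) = ‖x‖⁻¹ * N x := by
        rw [hN.2.2.1]; congr 1; rw [abs_inv, abs_of_pos hnx]
      rw [h2] at h1
      calc N z * ‖x‖ ≤ (‖x‖⁻¹ * N x) * ‖x‖ := by nlinarith
      _ = N x := by field_simp
  · push_neg at h
    refine ⟨1, one_pos, fun x => ?_⟩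
    rw [h x]
    simp [N_zero hN]



variable {d : ℕ} {N : Euc d → ℝ}


lemma mem_dual_set (hN : IsNorm N) (v : Euc d) :
    (0:ℝ) ∈ {r : ℝ | ∃ u, N u ≤ 1 ∧ r = (inner ℝ v u : ℝ)} :=
  ⟨0, by rw [N_zero hN]; norm_num, by simp⟩

lemma dual_set_bdd (hN : IsNorm N) (v : Euc d) :
    BddAbove {r : ℝ | ∃ u, N u ≤ 1 ∧ r = (inner ℝ v u : ℝ)} := by
  obtain ⟨a, ha, hla⟩ := exists_lower hN
  refine ⟨‖v‖ * a⁻¹, fun r hr => ?_⟩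
  obtain ⟨u, hu, rfl⟩ := hr
  have h1 : ‖u‖ ≤ a⁻¹ := by
    have := hla u
    rw [← le_div_iff₀' ha] at this
    calc ‖u‖ ≤ N u / a := this
    _ ≤ 1 / a := by gcongr
    _ = a⁻¹ := one_div a
  calc (inner ℝ v u : ℝ) ≤ ‖v‖ * ‖u‖ := real_inner_le_norm v u
  _ ≤ ‖v‖ * a⁻¹ := by gcongr
  _ = ‖v‖ * a⁻¹ := rfl

lemma dualNorm_nonneg (hN : IsNorm N) (v : Euc d) : 0 ≤ dualNorm N v :=
  le_csSup (dual_set_bdd hN v) (mem_dual_set hN v)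

lemma le_dualNorm (hN : IsNorm N) (v u : Euc d) (hu : N u ≤ 1) :
    (inner ℝ v u : ℝ) ≤ dualNorm N v :=
  le_csSup (dual_set_bdd hN v) ⟨u, hu, rfl⟩

/-- generalized Cauchy–Schwarz: ⟪v,z⟫ ≤ ‖v‖_* ⬝ N z -/
lemma inner_le_dual_mul (hN : IsNorm N) (v z : Euc d) :
    (inner ℝ v z : ℝ) ≤ dualNorm N v * N z := by
  rcases eq_or_ne z 0 with rfl | hz
  · simp [N_zero hN]
  · have hNz : 0 < N z := by
      rcases lt_or_eq_of_le (hN.1 z) with h | h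
      · exact h
      · exact absurd ((hN.2.1 z).1 h.symm) hz
    have hu : N ((N z)⁻¹ • z) ≤ 1 := by
      rw [hN.2.2.1, abs_inv, abs_of_pos hNz, inv_mul_cancel₀ hNz.ne']
    have h2 := le_dualNorm hN v _ hu
    rw [real_inner_smul_right] at h2
    calc (inner ℝ v z : ℝ) = ((N z)⁻¹ * (inner ℝ v z : ℝ)) * N z := by field_simp
    _ ≤ dualNorm N v * N z := by nlinarith

lemma dualNorm_smul_le (hN : IsNorm N) {s : ℝ} (hs : 0 ≤ s) (v : Euc d) :
    dualNorm N (s • v) ≤ s * dualNorm N v := by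
  refine csSup_le ⟨0, mem_dual_set hN _⟩ ?_
  rintro r ⟨u, hu, rfl⟩
  rw [real_inner_smul_left]
  exact mul_le_mul_of_nonneg_left (le_dualNorm hN v u hu) hs

lemma exists_dual_gt (hN : IsNorm N) (z : Euc d) {t : ℝ} (ht : 0 < t) (htz : t < N z) :
    ∃ w, dualNorm N w ≤ 1 ∧ t < (inner ℝ w z : ℝ) := by
  obtain ⟨b, hb, hub⟩ := exists_upper hN
  set t' : ℝ := (t + N z) / 2 with ht'
  have ht'0 : 0 < t' := by simp only [ht']; linarith
  have htt' : t < t' := by simp only [ht']; linarith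
  have ht'N : t' < N z := by simp only [ht']; linarith
  set x : Euc d := t'⁻¹ • z with hx
  have hNx : 1 < N x := by
    rw [hx, hN.2.2.1, abs_inv, abs_of_pos ht'0]
    rw [lt_inv_mul_iff₀ ht'0, mul_one]
    exact ht'N
  set S : Set (Euc d) := {u | N u < 1} with hS
  have hSo : IsOpen S := isOpen_lt (N_continuous hN) continuous_const
  have hSc : Convex ℝ S := by
    intro u hu v hv a c ha hc hac
    have h1 : N (a • u + c • v) ≤ a * N u + c * N v := by
      calc N (a • u + c • v) ≤ N (a • u) + N (c • v) := hN.2.2.2 _ _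
      _ = a * N u + c * N v := by
          rw [hN.2.2.1, hN.2.2.1, abs_of_nonneg ha, abs_of_nonneg hc]
    have hu' : N u < 1 := hu
    have hv' : N v < 1 := hv
    show N (a • u + c • v) < 1
    rcases eq_or_lt_of_le ha with rfl | ha'
    · have : c = 1 := by linarith
      subst this
      simpa using lt_of_le_of_lt h1 (by simpa using hv')
    · have : a * N u + c * N v < a * 1 + c * 1 := by
        have h2 : a * N u < a * 1 := by exact mul_lt_mul_of_pos_left hu' ha'
        have h3 : c * N v ≤ c * 1 := mul_le_mul_of_nonneg_left hv'.le hc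
        linarith
      calc N (a • u + c • v) ≤ a * N u + c * N v := h1
      _ < a * 1 + c * 1 := this
      _ = 1 := by linarith
  have hxS : x ∉ S := by simp only [hS, Set.mem_setOf_eq, not_lt]; exact hNx.le
  obtain ⟨ℓ, hℓ⟩ := geometric_hahn_banach_open_point hSc hSo hxS
  set w₀ : Euc d := (InnerProductSpace.toDual ℝ (Euc d)).symm ℓ with hw₀def
  have hw₀ : ∀ a : Euc d, (inner ℝ w₀ a : ℝ) = ℓ a := fun a =>
    InnerProductSpace.toDual_symm_apply
  set c : ℝ := ℓ x with hcdef
  have h0S : (0 : Euc d) ∈ S := by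
    simp only [hS, Set.mem_setOf_eq, N_zero hN]; norm_num
  have hc0 : 0 < c := by
    have := hℓ 0 h0S
    simpa using this
  have hbound : ∀ u, N u ≤ 1 → ℓ u ≤ c := by
    intro u hu
    by_contra hcon
    push_neg at hcon
    have hlu : 0 < ℓ u := lt_trans hc0 hcon
    set s : ℝ := (c + ℓ u) / (2 * ℓ u) with hsdef
    have hs0 : 0 < s := by positivity
    have hs1 : s < 1 := by
      rw [hsdef, div_lt_one (by positivity)]
      linarith
    have hmem : s • u ∈ S := by
      simp only [hS, Set.mem_setOf_eq]
      rw [hN.2.2.1, abs_of_pos hs0]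
      calc s * N u ≤ s * 1 := mul_le_mul_of_nonneg_left hu hs0.le
      _ < 1 := by linarith
    have hlt := hℓ _ hmem
    rw [ContinuousLinearMap.map_smul, smul_eq_mul] at hlt
    have hseq : s * ℓ u = (c + ℓ u) / 2 := by
      rw [hsdef]; field_simp
    rw [hseq] at hlt
    linarith
  have hw₀ne : w₀ ≠ 0 := by
    intro h
    have h2 : c = 0 := by rw [hcdef, ← hw₀ x, h]; simp
    linarith
  have hD_le : dualNorm N w₀ ≤ c := by
    refine csSup_le ⟨0, mem_dual_set hN _⟩ ?_
    rintro r ⟨u, hu, rfl⟩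
    rw [hw₀]
    exact hbound u hu
  have hnorm_pos : 0 < ‖w₀‖ := norm_pos_iff.2 hw₀ne
  set u₁ : Euc d := (b * ‖w₀‖)⁻¹ • w₀ with hu₁def
  have hu₁norm : ‖u₁‖ = (b * ‖w₀‖)⁻¹ * ‖w₀‖ := by
    rw [hu₁def, norm_smul, Real.norm_eq_abs, abs_of_pos (by positivity)]
  have hNu₁ : N u₁ ≤ 1 := by
    calc N u₁ ≤ b * ‖u₁‖ := hub _
    _ = 1 := by rw [hu₁norm]; field_simp
  have hinner₁ : (inner ℝ w₀ u₁ : ℝ) = (b * ‖w₀‖)⁻¹ * ‖w₀‖ ^ 2 := by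
    rw [hu₁def, real_inner_smul_right, real_inner_self_eq_norm_sq]
  have hDpos : 0 < dualNorm N w₀ := by
    have h3 : (0:ℝ) < (inner ℝ w₀ u₁ : ℝ) := by rw [hinner₁]; positivity
    exact lt_of_lt_of_le h3 (le_dualNorm hN _ _ hNu₁)
  set D : ℝ := dualNorm N w₀ with hDdef
  refine ⟨D⁻¹ • w₀, ?_, ?_⟩
  · calc dualNorm N (D⁻¹ • w₀) ≤ D⁻¹ * D :=
      dualNorm_smul_le hN (inv_nonneg.2 hDpos.le) w₀
    _ = 1 := inv_mul_cancel₀ hDpos.ne'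
  · have hz : z = t' • x := by rw [hx, smul_inv_smul₀ ht'0.ne']
    have h4 : (inner ℝ (D⁻¹ • w₀) z : ℝ) = D⁻¹ * (t' * c) := by
      rw [real_inner_smul_left, hz, real_inner_smul_right, hw₀, ← hcdef]
    rw [h4]
    have h6 : t' ≤ D⁻¹ * (t' * c) := by
      rw [← div_eq_inv_mul, le_div_iff₀ hDpos]
      nlinarith
    linarith

lemma subgrad_exists (f : Euc d → ℝ) (hf : ConvexOn ℝ Set.univ f) (x : Euc d) :
    ∃ u, RSubgradAt f x u := by
  have fcont : Continuous f := by
    have := hf.continuousOn isOpen_univ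
    rwa [continuousOn_univ] at this
  set S : Set (Euc d × ℝ) := {p | f p.1 < p.2} with hSdef
  have hSo : IsOpen S := isOpen_lt (fcont.comp continuous_fst) continuous_snd
  have hSc : Convex ℝ S := by
    rintro p hp q hq a b ha hb hab
    have hp' : f p.1 < p.2 := hp
    have hq' : f q.1 < q.2 := hq
    show f (a • p + b • q).1 < (a • p + b • q).2
    have h1 : (a • p + b • q).1 = a • p.1 + b • q.1 := rfl
    have h2 : (a • p + b • q).2 = a * p.2 + b * q.2 := rfl
    rw [h1, h2]
    have h3 := hf.2 (Set.mem_univ p.1) (Set.mem_univ q.1) ha hb hab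
    simp only [smul_eq_mul] at h3
    rcases eq_or_lt_of_le ha with rfl | ha'
    · have hb1 : b = 1 := by linarith
      subst hb1
      simpa using hq'
    · have h4 : a * f p.1 + b * f q.1 < a * p.2 + b * q.2 := by
        have := mul_lt_mul_of_pos_left hp' ha'
        have := mul_le_mul_of_nonneg_left hq'.le hb
        linarith
      exact lt_of_le_of_lt h3 h4
  have hxS : (x, f x) ∉ S := by simp [hSdef]
  obtain ⟨ℓ, hℓ⟩ := geometric_hahn_banach_open_point hSc hSo hxS
  set c : ℝ := ℓ (0, 1) with hcdef
  have hdecomp : ∀ (y : Euc d) (t : ℝ), ℓ (y, t) = ℓ (y, 0) + t * c := by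
    intro y t
    have : (y, t) = (y, 0) + t • ((0 : Euc d), (1:ℝ)) := by
      ext <;> simp
    rw [this, map_add, ContinuousLinearMap.map_smul, smul_eq_mul]
  have hlx : ℓ (x, f x) = ℓ (x, 0) + f x * c := hdecomp x (f x)
  have hc0 : c < 0 := by
    have hmem : (x, f x + 1) ∈ S := by simp [hSdef]
    have := hℓ _ hmem
    rw [hdecomp x (f x + 1), hlx] at this
    linarith
  have key : ∀ y, ℓ (y, 0) + f y * c ≤ ℓ (x, 0) + f x * c := by
    intro y
    have step : ∀ ε : ℝ, 0 < ε → ℓ (y, 0) + f y * c < ℓ (x, 0) + f x * c + ε * (-c) := by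
      intro ε hε
      have hmem : (y, f y + ε) ∈ S := by simp [hSdef, hε]
      have := hℓ _ hmem
      rw [hdecomp y (f y + ε), hlx] at this
      nlinarith
    by_contra hcon
    push_neg at hcon
    have hεpos : 0 < (ℓ (y, 0) + f y * c - (ℓ (x, 0) + f x * c)) / (-c) := by
      apply div_pos (by linarith) (by linarith)
    have := step _ hεpos
    rw [div_mul_cancel₀ _ (by linarith : (-c) ≠ 0)] at this
    linarith
  set Lmap : Euc d →L[ℝ] ℝ := ℓ.comp (ContinuousLinearMap.inl ℝ (Euc d) ℝ) with hLdef
  have hLapp : ∀ y, Lmap y = ℓ (y, 0) := fun y => rfl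
  set u : Euc d := (InnerProductSpace.toDual ℝ (Euc d)).symm Lmap with hudef
  have hu : ∀ a : Euc d, (inner ℝ u a : ℝ) = ℓ (a, 0) := fun a =>
    InnerProductSpace.toDual_symm_apply
  refine ⟨(-c)⁻¹ • u, fun y => ?_⟩
  have hinner : (inner ℝ ((-c)⁻¹ • u) (y - x) : ℝ) = (-c)⁻¹ * (ℓ (y, 0) - ℓ (x, 0)) := by
    rw [real_inner_smul_left, inner_sub_right, hu, hu]
  rw [hinner]
  have hk := key y
  have hcpos : 0 < -c := by linarith
  rw [← sub_nonneg]
  have hcne : c ≠ 0 := by linarith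
  have expand : f y - (f x + (-c)⁻¹ * (ℓ (y, 0) - ℓ (x, 0)))
      = (-c)⁻¹ * ((ℓ (x, 0) + f x * c) - (ℓ (y, 0) + f y * c)) := by
    field_simp
    ring
  rw [expand]
  exact mul_nonneg (inv_nonneg.2 hcpos.le) (by linarith)


variable {d : ℕ} {N : Euc d → ℝ}

lemma dualNorm_le_norm (hN : IsNorm N) {a : ℝ} (ha : 0 < a)
    (hla : ∀ x, a * ‖x‖ ≤ N x) (v : Euc d) : dualNorm N v ≤ ‖v‖ * a⁻¹ := by
  refine csSup_le ⟨0, mem_dual_set hN v⟩ ?_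
  rintro r ⟨u, hu, rfl⟩
  have h1 : ‖u‖ ≤ a⁻¹ := by
    have := hla u
    rw [← le_div_iff₀' ha] at this
    calc ‖u‖ ≤ N u / a := this
    _ ≤ 1 / a := by gcongr
    _ = a⁻¹ := one_div a
  calc (inner ℝ v u : ℝ) ≤ ‖v‖ * ‖u‖ := real_inner_le_norm v u
  _ ≤ ‖v‖ * a⁻¹ := by gcongr

lemma dualNorm_zero (hN : IsNorm N) : dualNorm N (0 : Euc d) = 0 := by
  refine le_antisymm ?_ (dualNorm_nonneg hN 0)
  refine csSup_le ⟨0, mem_dual_set hN 0⟩ ?_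
  rintro r ⟨u, hu, rfl⟩
  simp

/-- Forward direction -/
lemma fwd (hN : IsNorm N) (f : Euc d → ℝ) (hf : ConvexOn ℝ Set.univ f)
    (μ : ℝ) (hμ : 0 < μ)
    (hSC : ∀ x u, RSubgradAt f x u →
        ∀ y, f x + (inner ℝ u (y - x) : ℝ) + μ / 2 * (N (y - x)) ^ 2 ≤ f y) :
    ∃ (φ : Euc d → ℝ) (φ' : Euc d → Euc d),
      (∀ v, econj (fun x => (f x : EReal)) v = (φ v : EReal)) ∧
      (∀ w, HasGradientAt φ (φ' w) w) ∧
      (∀ u w, φ u ≤ φ w + (inner ℝ (φ' w) (u - w) : ℝ)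
          + (1 / μ) / 2 * (dualNorm N (u - w)) ^ 2) := by
  obtain ⟨a, ha, hla⟩ := exists_lower hN
  have fcont : Continuous f := by
    have := hf.continuousOn isOpen_univ
    rwa [continuousOn_univ] at this
  obtain ⟨u₀, hu₀⟩ := subgrad_exists f hf 0
  -- existence of maximizers
  have hmax : ∀ v : Euc d, ∃ m : Euc d,
      ∀ y, (inner ℝ v y : ℝ) - f y ≤ (inner ℝ v m : ℝ) - f m := by
    intro v
    obtain ⟨K, hK⟩ : ∃ K : ℝ, K = ‖v‖ + ‖u₀‖ := ⟨_, rfl⟩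
    have hK0 : 0 ≤ K := by rw [hK]; positivity
    obtain ⟨c₂, hc₂⟩ : ∃ c₂ : ℝ, c₂ = μ * a ^ 2 / 2 := ⟨_, rfl⟩
    have hc₂0 : 0 < c₂ := by rw [hc₂]; positivity
    have hgrow : ∀ y : Euc d, (inner ℝ v y : ℝ) - f y ≤ K * ‖y‖ - f 0 - c₂ * ‖y‖ ^ 2 := by
      intro y
      have h1 := hSC 0 u₀ hu₀ y
      simp only [sub_zero] at h1
      have h2 : a * ‖y‖ ≤ N y := hla y
      have h2' : μ / 2 * (a * ‖y‖) ^ 2 ≤ μ / 2 * (N y) ^ 2 := by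
        have hna : 0 ≤ a * ‖y‖ := mul_nonneg ha.le (norm_nonneg y)
        have hprod : 0 ≤ (N y - a * ‖y‖) * (N y + a * ‖y‖) :=
          mul_nonneg (by linarith) (by linarith)
        nlinarith [hprod]
      have h3 : (inner ℝ v y : ℝ) ≤ ‖v‖ * ‖y‖ := real_inner_le_norm v y
      have h4 : -(inner ℝ u₀ y : ℝ) ≤ ‖u₀‖ * ‖y‖ := by
        have h5 := abs_real_inner_le_norm u₀ y
        have := neg_abs_le (inner ℝ u₀ y : ℝ)
        linarith
      have hexp : μ / 2 * (a * ‖y‖) ^ 2 = c₂ * ‖y‖ ^ 2 := by rw [hc₂]; ring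
      have hKy : K * ‖y‖ = ‖v‖ * ‖y‖ + ‖u₀‖ * ‖y‖ := by rw [hK]; ring
      linarith
    obtain ⟨R, hR⟩ : ∃ R : ℝ, R = (K + 1) / c₂ + 1 := ⟨_, rfl⟩
    have hR1 : 1 ≤ R := by
      have : 0 < (K + 1) / c₂ := div_pos (by linarith) hc₂0
      linarith
    have hball : (0 : Euc d) ∈ Metric.closedBall (0 : Euc d) R := by
      simp; linarith
    obtain ⟨m, hmB, hm⟩ := (isCompact_closedBall (0 : Euc d) R).exists_isMaxOn
      ⟨0, hball⟩ (((continuous_const.inner continuous_id).sub fcont).continuousOn)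
    refine ⟨m, fun y => ?_⟩
    by_cases hy : y ∈ Metric.closedBall (0 : Euc d) R
    · exact hm hy
    · have hyR : R < ‖y‖ := by
        simp only [Metric.mem_closedBall, dist_zero_right, not_le] at hy
        exact hy
      have h0 : (inner ℝ v (0:Euc d) : ℝ) - f 0 ≤ (inner ℝ v m : ℝ) - f m := hm hball
      have hout : (inner ℝ v y : ℝ) - f y < (inner ℝ v (0:Euc d) : ℝ) - f 0 := by
        have h6 := hgrow y
        have h7 : c₂ * R ≥ K + 1 := by
          rw [hR]
          have : c₂ * ((K + 1) / c₂) = K + 1 := by field_simp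
          nlinarith
        have h9 : ‖y‖ ≥ 1 := by linarith
        have hy0 : (0:ℝ) < ‖y‖ := by linarith
        have h8 : c₂ * ‖y‖ ^ 2 > (K + 1) * ‖y‖ := by
          nlinarith [mul_lt_mul_of_pos_left hyR (mul_pos hc₂0 hy0),
            mul_le_mul_of_nonneg_right h7 hy0.le]
        simp only [inner_zero_right]
        nlinarith
      linarith
  choose xv hxv using hmax
  have hsub : ∀ w, RSubgradAt f (xv w) w := by
    intro w z
    have h := hxv w z
    rw [inner_sub_right]
    have : (inner ℝ w z : ℝ) = inner ℝ w (z - xv w) + inner ℝ w (xv w) := by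
      rw [inner_sub_right]; ring
    linarith [hxv w z, this ▸ hxv w z]
  obtain ⟨φ, hφ⟩ : ∃ φ : Euc d → ℝ, φ = fun v => (inner ℝ v (xv v) : ℝ) - f (xv v) := ⟨_, rfl⟩
  have key : ∀ u w, φ u ≤ φ w + (inner ℝ (u - w) (xv w) : ℝ)
      + 1 / (2 * μ) * (dualNorm N (u - w)) ^ 2 := by
    intro u w
    have h1 := hSC (xv w) w (hsub w) (xv u)
    have h2 := inner_le_dual_mul hN (u - w) (xv u - xv w)
    have hD0 : 0 ≤ dualNorm N (u - w) := dualNorm_nonneg hN _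
    have hn0 : 0 ≤ N (xv u - xv w) := hN.1 _
    have e1 : (inner ℝ u (xv u) : ℝ) = inner ℝ w (xv w) + inner ℝ (u - w) (xv w)
        + inner ℝ w (xv u - xv w) + inner ℝ (u - w) (xv u - xv w) := by
      simp only [inner_sub_left, inner_sub_right]
      ring
    have amgm : dualNorm N (u - w) * N (xv u - xv w) ≤
        μ / 2 * (N (xv u - xv w)) ^ 2 + 1 / (2 * μ) * (dualNorm N (u - w)) ^ 2 := by
      have hsq := sq_nonneg (μ * N (xv u - xv w) - dualNorm N (u - w))
      have h9 : 0 < 2 * μ := by linarith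
      rw [← sub_nonneg]
      have expand : μ / 2 * (N (xv u - xv w)) ^ 2 + 1 / (2 * μ) * (dualNorm N (u - w)) ^ 2
          - dualNorm N (u - w) * N (xv u - xv w)
          = (μ * N (xv u - xv w) - dualNorm N (u - w)) ^ 2 / (2 * μ) := by
        field_simp
        ring
      rw [expand]
      positivity
    simp only [hφ]
    nlinarith [h1, h2, e1, amgm]
  have low : ∀ u w, φ w + (inner ℝ (u - w) (xv w) : ℝ) ≤ φ u := by
    intro u w
    have h1 := hxv u (xv w)
    simp only [hφ]
    have e1 : (inner ℝ u (xv w) : ℝ) = inner ℝ w (xv w) + inner ℝ (u - w) (xv w) := by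
      rw [inner_sub_left]; ring
    linarith
  refine ⟨φ, xv, ?_, ?_, ?_⟩
  · intro v
    simp only [hφ]
    refine le_antisymm ?_ ?_
    · refine iSup_le fun y => ?_
      rw [show ((inner ℝ v y : ℝ) : EReal) - ((f y : ℝ) : EReal)
          = (((inner ℝ v y : ℝ) - f y : ℝ) : EReal) from (EReal.coe_sub _ _).symm]
      exact_mod_cast hxv v y
    · have h := le_iSup (fun u => ((inner ℝ v u : ℝ) : EReal) - ((f u : ℝ) : EReal)) (xv v)
      rw [show ((inner ℝ v (xv v) : ℝ) : EReal) - ((f (xv v) : ℝ) : EReal)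
          = (((inner ℝ v (xv v) : ℝ) - f (xv v) : ℝ) : EReal) from (EReal.coe_sub _ _).symm] at h
      exact h
  · intro w
    rw [hasGradientAt_iff_isLittleO]
    rw [Asymptotics.isLittleO_iff]
    intro ε hε
    obtain ⟨C, hC⟩ : ∃ C : ℝ, C = 1 / (2 * μ) * (a⁻¹) ^ 2 + 1 := ⟨_, rfl⟩
    have hC0 : 0 < C := by rw [hC]; positivity
    have hball : Metric.ball w (ε / C) ∈ nhds w := Metric.ball_mem_nhds w (by positivity)
    filter_upwards [hball] with u hu
    rw [Metric.mem_ball, dist_eq_norm] at hu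
    have hDle : dualNorm N (u - w) ≤ ‖u - w‖ * a⁻¹ := dualNorm_le_norm hN ha hla _
    have hD0 : 0 ≤ dualNorm N (u - w) := dualNorm_nonneg hN _
    have hup := key u w
    have hlo := low u w
    have hcomm : (inner ℝ (xv w) (u - w) : ℝ) = inner ℝ (u - w) (xv w) := real_inner_comm _ _
    have hbound : |φ u - φ w - (inner ℝ (xv w) (u - w) : ℝ)| ≤ C * ‖u - w‖ ^ 2 := by
      rw [abs_le]
      constructor
      · rw [hcomm]; have : (0:ℝ) ≤ C * ‖u - w‖ ^ 2 := by positivity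
        linarith
      · rw [hcomm]
        have h2 : 1 / (2 * μ) * (dualNorm N (u - w)) ^ 2 ≤ C * ‖u - w‖ ^ 2 := by
          have h3 : (dualNorm N (u - w)) ^ 2 ≤ (‖u - w‖ * a⁻¹) ^ 2 := by nlinarith
          have h4 : 0 < 1 / (2 * μ) := by positivity
          calc 1 / (2 * μ) * (dualNorm N (u - w)) ^ 2
              ≤ 1 / (2 * μ) * (‖u - w‖ * a⁻¹) ^ 2 := by nlinarith
          _ = (1 / (2 * μ) * (a⁻¹) ^ 2) * ‖u - w‖ ^ 2 := by ring
          _ ≤ C * ‖u - w‖ ^ 2 := by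
              have : (0:ℝ) ≤ ‖u - w‖ ^ 2 := sq_nonneg _
              nlinarith
        linarith
    have hfinal : ‖φ u - φ w - (inner ℝ (xv w) (u - w) : ℝ)‖ ≤ ε * ‖u - w‖ := by
      rw [Real.norm_eq_abs]
      calc |φ u - φ w - (inner ℝ (xv w) (u - w) : ℝ)| ≤ C * ‖u - w‖ ^ 2 := hbound
      _ = (C * ‖u - w‖) * ‖u - w‖ := by ring
      _ ≤ ε * ‖u - w‖ := by
          have h5 : C * ‖u - w‖ ≤ ε := by
            rcases le_or_gt ‖u - w‖ (ε / C) with h | h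
            · calc C * ‖u - w‖ ≤ C * (ε / C) := by nlinarith [norm_nonneg (u - w)]
              _ = ε := by field_simp
            · linarith
          nlinarith [norm_nonneg (u - w)]
    exact hfinal
  · intro u w
    have := key u w
    have hcomm : (inner ℝ (xv w) (u - w) : ℝ) = inner ℝ (u - w) (xv w) := real_inner_comm _ _
    have heq : (1 / μ) / 2 = 1 / (2 * μ) := by ring
    rw [hcomm, heq]
    exact this

/-- Backward direction -/
lemma bwd (hN : IsNorm N) (f : Euc d → ℝ) (hf : ConvexOn ℝ Set.univ f)
    (μ : ℝ) (hμ : 0 < μ)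
    (φ : Euc d → ℝ) (φ' : Euc d → Euc d)
    (hconj : ∀ v, econj (fun x => (f x : EReal)) v = (φ v : EReal))
    (hgrad : ∀ w, HasGradientAt φ (φ' w) w)
    (hsmooth : ∀ u w, φ u ≤ φ w + (inner ℝ (φ' w) (u - w) : ℝ)
          + (1 / μ) / 2 * (dualNorm N (u - w)) ^ 2) :
    ∀ x u, RSubgradAt f x u →
        ∀ y, f x + (inner ℝ u (y - x) : ℝ) + μ / 2 * (N (y - x)) ^ 2 ≤ f y := by
  intro x u hu y
  have hφlow : ∀ v z, (inner ℝ v z : ℝ) - f z ≤ φ v := by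
    intro v z
    have h : (((inner ℝ v z : ℝ) - f z : ℝ) : EReal) ≤ ((φ v : ℝ) : EReal) := by
      rw [← hconj v, EReal.coe_sub]
      exact le_iSup (fun w => ((inner ℝ v w : ℝ) : EReal) - ((f w : ℝ) : EReal)) z
    exact_mod_cast h
  have hφu : φ u = (inner ℝ u x : ℝ) - f x := by
    refine le_antisymm ?_ (hφlow u x)
    have h : ((φ u : ℝ) : EReal) ≤ (((inner ℝ u x : ℝ) - f x : ℝ) : EReal) := by
      rw [← hconj u]
      refine iSup_le fun z => ?_
      rw [show ((inner ℝ u z : ℝ) : EReal) - ((f z : ℝ) : EReal)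
          = (((inner ℝ u z : ℝ) - f z : ℝ) : EReal) from (EReal.coe_sub _ _).symm]
      apply EReal.coe_le_coe_iff.2
      have h2 := hu z
      rw [inner_sub_right] at h2
      linarith
    exact_mod_cast h
  -- gradient of φ at u is x
  have hgradu : φ' u = x := by
    set ψ : Euc d → ℝ := fun v => φ v - (inner ℝ x v : ℝ) with hψ
    have hψgrad : HasFDerivAt ψ ((InnerProductSpace.toDual ℝ (Euc d)) (φ' u)
        - (InnerProductSpace.toDual ℝ (Euc d)) x) u := by
      apply HasFDerivAt.sub
      · exact (hgrad u).hasFDerivAt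
      · have h := ((InnerProductSpace.toDual ℝ (Euc d)) x).hasFDerivAt (x := u)
        have heq : ⇑((InnerProductSpace.toDual ℝ (Euc d)) x)
            = fun v : Euc d => (inner ℝ x v : ℝ) := by
          funext v
          exact InnerProductSpace.toDual_apply_apply
        rwa [heq] at h
    have hmin : IsLocalMin ψ u := by
      apply Filter.Eventually.of_forall
      intro v
      have h1 := hφlow v x
      have h2 : (inner ℝ x v : ℝ) = inner ℝ v x := real_inner_comm _ _
      have h3 : (inner ℝ x u : ℝ) = inner ℝ u x := real_inner_comm _ _
      simp only [hψ]
      rw [hφu, h2, h3]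
      linarith
    have hzero := hmin.hasFDerivAt_eq_zero hψgrad
    have h4 : (InnerProductSpace.toDual ℝ (Euc d)) (φ' u)
        = (InnerProductSpace.toDual ℝ (Euc d)) x := sub_eq_zero.1 hzero
    exact (InnerProductSpace.toDual ℝ (Euc d)).injective h4
  set z : Euc d := y - x with hz
  have base : ∀ w : Euc d,
      f x + (inner ℝ u z : ℝ) + ((inner ℝ w z : ℝ) - (1/μ)/2 * (dualNorm N w)^2) ≤ f y := by
    intro w
    have h1 := hsmooth (u + w) u
    rw [hgradu, add_sub_cancel_left] at h1
    have h3 := hφlow (u + w) y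
    rw [hφu] at h1
    have e1 : (inner ℝ (u + w) y : ℝ) = inner ℝ u y + inner ℝ w y := by rw [inner_add_left]
    have e2 : (inner ℝ u z : ℝ) = inner ℝ u y - inner ℝ u x := by rw [hz, inner_sub_right]
    have e3 : (inner ℝ w z : ℝ) = inner ℝ w y - inner ℝ w x := by rw [hz, inner_sub_right]
    have e4 : (inner ℝ x w : ℝ) = inner ℝ w x := real_inner_comm _ _
    linarith
  rcases eq_or_lt_of_le (hN.1 z) with hz0 | hz0
  · have h1 := base 0
    rw [dualNorm_zero hN] at h1
    simp only [inner_zero_left] at h1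
    rw [← hz0]
    norm_num
    norm_num at h1
    linarith
  · have tend : Filter.Tendsto (fun t : ℝ => f x + (inner ℝ u z : ℝ) + μ / 2 * t ^ 2)
        (nhdsWithin (N z) (Set.Iio (N z)))
        (nhds (f x + (inner ℝ u z : ℝ) + μ / 2 * (N z) ^ 2)) := by
      apply Filter.Tendsto.mono_left _ nhdsWithin_le_nhds
      exact (Continuous.tendsto (by continuity) (N z))
    have hle : f x + (inner ℝ u z : ℝ) + μ / 2 * (N z) ^ 2 ≤ f y := by
      refine le_of_tendsto tend ?_
      filter_upwards [Ioo_mem_nhdsLT_of_mem (Set.mem_Ioc.2 ⟨hz0, le_refl _⟩)] with t ht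
      obtain ⟨ht0, htN⟩ := ht
      obtain ⟨w₀, hw1, hw2⟩ := exists_dual_gt hN z ht0 htN
      have h1 := base ((μ * t) • w₀)
      have hμt : 0 < μ * t := by positivity
      have e5 : (inner ℝ ((μ * t) • w₀) z : ℝ) = (μ * t) * inner ℝ w₀ z := by
        rw [real_inner_smul_left]
      have hDsmul : dualNorm N ((μ * t) • w₀) ≤ μ * t := by
        calc dualNorm N ((μ * t) • w₀) ≤ (μ * t) * dualNorm N w₀ :=
          dualNorm_smul_le hN hμt.le w₀
        _ ≤ (μ * t) * 1 := by
            have := dualNorm_nonneg hN w₀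
            nlinarith
        _ = μ * t := mul_one _
      have hD0 : 0 ≤ dualNorm N ((μ * t) • w₀) := dualNorm_nonneg hN _
      have hDsq : (dualNorm N ((μ * t) • w₀)) ^ 2 ≤ (μ * t) ^ 2 := by nlinarith
      have h6 : (μ * t) * (inner ℝ w₀ z : ℝ) ≥ (μ * t) * t := by nlinarith
      have h7 : (1/μ)/2 * (dualNorm N ((μ * t) • w₀))^2 ≤ (1/μ)/2 * (μ * t)^2 := by
        have : (0:ℝ) < (1/μ)/2 := by positivity
        nlinarith
      have h8 : (1/μ)/2 * (μ * t)^2 = μ / 2 * t ^ 2 := by field_simp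
      rw [e5] at h1
      linarith
    exact hle

end SCaux

/-- a closed (real-valued) convex function `f` is `μ`-strongly convex w.r.t. a
norm `N` (μ > 0) iff its conjugate `f*` is `(1/μ)`-smooth w.r.t. the dual norm. -/
theorem stmt1 {d : ℕ} (N : Euc d → ℝ) (hN : IsNorm N)
    (f : Euc d → ℝ) (hf : ConvexOn ℝ Set.univ f) (μ : ℝ) (hμ : 0 < μ) :
    (∀ x u, RSubgradAt f x u →
        ∀ y, f x + (inner ℝ u (y - x) : ℝ) + μ / 2 * (N (y - x)) ^ 2 ≤ f y)
      ↔
    (∃ (φ : Euc d → ℝ) (φ' : Euc d → Euc d),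
      (∀ v, econj (fun x => (f x : EReal)) v = (φ v : EReal)) ∧
      (∀ w, HasGradientAt φ (φ' w) w) ∧
      (∀ u w, φ u ≤ φ w + (inner ℝ (φ' w) (u - w) : ℝ)
          + (1 / μ) / 2 * (dualNorm N (u - w)) ^ 2)) := by
  constructor
  · intro hSC
    exact SCaux.fwd hN f hf μ hμ hSC
  · rintro ⟨φ, φ', hconj, hgrad, hsmooth⟩
    exact SCaux.bwd hN f hf μ hμ φ φ' hconj hgrad hsmooth
end
end

section
/- Suppose f is (1/β)-smooth w.r.t. ‖·‖_f, g is μ-strongly convex (μ > 0) w.r.t. ‖·‖_g, and σ := (max_{α≠0} ‖Aα‖_f/‖α‖_g)². Then with the choice s = μ/(σ/β + μ), the improvement bound of the main lemma implies the pointwise inequality G(α) ≤ (1 + σ/(βμ)) · (D(α) - D(α⋆)) for every α ∈ dom D, where G is the duality gap and D(α) = f(Aα) + g(α) with minimizer α⋆. -/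
open scoped BigOperators ENNReal
open MeasureTheory

noncomputable section

open Filter Topology

lemma convex_grad_ineq {m : ℕ} {f : Euc m → ℝ} (hfc : ConvexOn ℝ Set.univ f)
    {x w : Euc m} (hw : HasGradientAt f w x) (y : Euc m) :
    f x + (inner ℝ w (y - x) : ℝ) ≤ f y := by
  set v := y - x with hv
  have hc : HasDerivAt (fun t : ℝ => f (x + t • v)) (inner ℝ w v : ℝ) 0 := by
    have hline : HasDerivAt (fun t : ℝ => x + t • v) v 0 := by
      simpa using ((hasDerivAt_id (0:ℝ)).smul_const v).const_add x
    have hf : HasFDerivAt f (InnerProductSpace.toDual ℝ _ w) x := hw.hasFDerivAt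
    have hf2 : HasFDerivAt f (InnerProductSpace.toDual ℝ _ w)
        ((fun t : ℝ => x + t • v) 0) := by simpa using hf
    have := hf2.comp_hasDerivAt 0 hline
    simpa [Function.comp_def] using this
  have hslope := hasDerivAt_iff_tendsto_slope.mp hc
  have hmono : Tendsto (slope (fun t : ℝ => f (x + t • v)) 0) (𝓝[>] 0)
      (𝓝 (inner ℝ w v : ℝ)) :=
    hslope.mono_left (nhdsWithin_mono _ (fun t ht => ne_of_gt ht))
  have hle : ∀ᶠ t in 𝓝[>] (0:ℝ), slope (fun t : ℝ => f (x + t • v)) 0 t ≤ f y - f x := by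
    filter_upwards [Ioc_mem_nhdsGT_of_mem (by norm_num : (0:ℝ) ∈ Set.Ico 0 1)] with t ht
    have hseg : x + t • v = (1 - t) • x + t • y := by
      rw [hv]; module
    have hcv := hfc.2 (Set.mem_univ x) (Set.mem_univ y)
      (by linarith [ht.2] : (0:ℝ) ≤ 1 - t) (le_of_lt ht.1) (by ring)
    rw [← hseg] at hcv
    simp only [smul_eq_mul] at hcv
    rw [slope_def_field]
    simp only [sub_zero]
    rw [div_le_iff₀ ht.1]
    have h0 : x + (0:ℝ) • v = x := by simp
    rw [h0]
    nlinarith [hcv]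
  have := le_of_tendsto hmono hle
  linarith


set_option maxHeartbeats 1000000 in
/-- with `f` `(1/β)`-smooth, `g` `μ`-strongly convex (`μ > 0`) and
`σ` the squared operator norm of `A` (i.e. `‖Ax‖_f² ≤ σ ‖x‖_g²`), the duality gap
satisfies `G(α) ≤ (1 + σ/(βμ)) (D(α) - D(α⋆))` for every `α ∈ dom D`. -/
theorem stmt6 {d n : ℕ} (A : Euc n →L[ℝ] Euc d)
    (Nf : Euc d → ℝ) (hNf : IsNorm Nf) (Ng : Euc n → ℝ) (hNg : IsNorm Ng)
    (f : Euc d → ℝ) (hfc : ConvexOn ℝ Set.univ f)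
    (f' : Euc d → Euc d) (hf' : ∀ x, HasGradientAt f (f' x) x)
    (β : ℝ) (hβ : 0 < β)
    (hsmooth : ∀ x y, f y ≤ f x + (inner ℝ (f' x) (y - x) : ℝ)
        + 1 / (2 * β) * (Nf (y - x)) ^ 2)
    (g : Euc n → EReal) (hg : EProper g) (hgc : EConvex g)
    (μ : ℝ) (hμ : 0 < μ)
    (hgsc : ∀ x u, ESubgradAt g x u → ∀ y,
        g x + (((inner ℝ u (y - x) : ℝ) + μ / 2 * (Ng (y - x)) ^ 2 : ℝ) : EReal) ≤ g y)
    (σ : ℝ) (hσ0 : 0 ≤ σ) (hσA : ∀ x, (Nf (A x)) ^ 2 ≤ σ * (Ng x) ^ 2)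
    (αstar : Euc n)
    (hstar : ∀ α : Euc n,
        ((f (A αstar) : ℝ) : EReal) + g αstar ≤ ((f (A α) : ℝ) : EReal) + g α)
    (α : Euc n) (hα : g α ≠ ⊤) :
    econj g (-(ContinuousLinearMap.adjoint A) (f' (A α))) + g α
        + ((inner ℝ (f' (A α)) (A α) : ℝ) : EReal)
      ≤ ((1 + σ / (β * μ) : ℝ) : EReal)
          * ((((f (A α) : ℝ) : EReal) + g α)
              - (((f (A αstar) : ℝ) : EReal) + g αstar)) := by
  obtain ⟨hgbot, -⟩ := hg
  have haeq : (((g α).toReal : ℝ) : EReal) = g α := EReal.coe_toReal hα (hgbot α)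
  set a : ℝ := (g α).toReal with hadef
  -- g αstar is finite
  have hgsne : g αstar ≠ ⊤ := by
    intro h
    have h1 := hstar α
    rw [h, EReal.coe_add_top, ← haeq, ← EReal.coe_add, top_le_iff] at h1
    exact EReal.coe_ne_top _ h1
  have hbeq : (((g αstar).toReal : ℝ) : EReal) = g αstar :=
    EReal.coe_toReal hgsne (hgbot αstar)
  set b : ℝ := (g αstar).toReal with hbdef
  set w : Euc d := f' (A α) with hw
  set ws : Euc d := f' (A αstar) with hws
  have innfact : ∀ (q : Euc d) (z : Euc n),
      (inner ℝ (-(ContinuousLinearMap.adjoint A) q) z : ℝ) = -(inner ℝ q (A z) : ℝ) := by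
    intro q z
    rw [inner_neg_left, ContinuousLinearMap.adjoint_inner_left]
  -- Step B : subgradient of g at αstar
  have hsub : ESubgradAt g αstar (-(ContinuousLinearMap.adjoint A) ws) := by
    intro y
    by_cases hy : g y = ⊤
    · rw [hy]; exact le_top
    · have hyeq : (((g y).toReal : ℝ) : EReal) = g y := EReal.coe_toReal hy (hgbot y)
      set cy : ℝ := (g y).toReal with hcydef
      rw [← hbeq, ← hyeq, innfact ws (y - αstar), ← EReal.coe_add, EReal.coe_le_coe_iff]
      set P : ℝ := (inner ℝ ws (A (y - αstar)) : ℝ) with hP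
      set Qy : ℝ := 1/(2*β) * (Nf (A (y - αstar)))^2 with hQy
      have hQy0 : 0 ≤ Qy := by
        apply mul_nonneg (by positivity) (sq_nonneg _)
      have hstep : ∀ t : ℝ, 0 < t → t ≤ 1 → b ≤ P + t * Qy + cy := by
        intro t ht0 ht1
        have hyt : αstar + t • (y - αstar) = (1 - t) • αstar + t • y := by module
        have e2 := hgc αstar y (1 - t) t (by linarith) (le_of_lt ht0) (by ring)
        rw [← hyt, ← hbeq, ← hyeq] at e2
        have e2' : g (αstar + t • (y - αstar)) ≤ (((1-t)*b + t*cy : ℝ) : EReal) :=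
          e2.trans_eq (by norm_cast)
        have e1 := hstar (αstar + t • (y - αstar))
        have e3 : f (A (αstar + t • (y - αstar))) ≤ f (A αstar) + t * P + t^2 * Qy := by
          have hAyt : A (αstar + t • (y - αstar)) = A αstar + t • (A (y - αstar)) := by
            rw [map_add, A.map_smul]
          have hsm := hsmooth (A αstar) (A αstar + t • (A (y - αstar)))
          have harg : A αstar + t • A (y - αstar) - A αstar = t • A (y - αstar) := by
            abel
          rw [harg, real_inner_smul_right, hNf.2.2.1, abs_of_pos ht0] at hsm
          rw [hAyt, hP, hQy]
          nlinarith [hsm]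
        have e4 : (((f (A αstar) + b : ℝ)) : EReal)
            ≤ ((f (A (αstar + t • (y - αstar))) + ((1-t)*b + t*cy) : ℝ) : EReal) := by
          calc (((f (A αstar) + b : ℝ)) : EReal)
              = ((f (A αstar) : ℝ) : EReal) + ((b:ℝ) : EReal) := by norm_cast
            _ ≤ ((f (A (αstar + t • (y - αstar))) : ℝ) : EReal)
                  + g (αstar + t • (y - αstar)) := by rw [hbeq]; exact e1
            _ ≤ ((f (A (αstar + t • (y - αstar))) : ℝ) : EReal)
                  + (((1-t)*b + t*cy : ℝ) : EReal) := add_le_add_right e2' _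
            _ = _ := by norm_cast
        have e4' : f (A αstar) + b
            ≤ f (A (αstar + t • (y - αstar))) + ((1-t)*b + t*cy) := by
          exact_mod_cast e4
        have e5 : t * b ≤ t * (P + t*Qy + cy) := by nlinarith [e3, e4']
        exact le_of_mul_le_mul_left e5 ht0
      by_contra hcon
      push_neg at hcon
      set ε : ℝ := b + -P - cy with hε
      have hε0 : 0 < ε := by
        simp only [hε]
        linarith [hcon]
      set t0 : ℝ := min 1 (ε/(2*(Qy+1))) with ht0def
      have ht0pos : 0 < t0 := lt_min one_pos (by positivity)
      have ht := hstep t0 ht0pos (min_le_left _ _)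
      have htq : t0 * Qy ≤ ε/2 := by
        have h1 : t0 ≤ ε/(2*(Qy+1)) := min_le_right _ _
        have h2 : t0 * Qy ≤ (ε/(2*(Qy+1))) * Qy :=
          mul_le_mul_of_nonneg_right h1 hQy0
        have h3 : (ε/(2*(Qy+1))) * Qy ≤ ε/2 := by
          rw [div_mul_eq_mul_div, div_le_div_iff₀ (by linarith) (by norm_num)]
          nlinarith
        linarith
      linarith
  -- strong convexity inequalities from the subgradient
  have SC := hgsc αstar _ hsub
  have SCreal : ∀ y : Euc n, ∀ cy : ℝ, g y = (cy : EReal) →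
      b + (-(inner ℝ ws (A y - A αstar) : ℝ) + μ/2 * (Ng (y - αstar))^2) ≤ cy := by
    intro y cy hcy
    have h1 := SC y
    rw [hcy, ← hbeq, innfact ws (y - αstar), ← EReal.coe_add, EReal.coe_le_coe_iff] at h1
    rw [map_sub] at h1
    linarith [h1]
  have SCα : b + (-(inner ℝ ws (A α - A αstar) : ℝ) + μ/2 * (Ng (α - αstar))^2) ≤ a :=
    SCreal α a haeq.symm
  -- Bregman/cocoercivity-type inequality
  have stepD : ∀ z : Euc d, (inner ℝ (ws - w) z : ℝ)
      ≤ (f (A α) - f (A αstar) - (inner ℝ ws (A α - A αstar) : ℝ)) + 1/(2*β) * (Nf z)^2 := by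
    intro z
    have h1 := convex_grad_ineq hfc (hf' (A αstar)) (A α + z)
    have h2 := hsmooth (A α) (A α + z)
    rw [add_sub_cancel_left] at h2
    have hre : A α + z - A αstar = (A α - A αstar) + z := by abel
    rw [hre, inner_add_right] at h1
    rw [inner_sub_left]
    linarith [h1, h2]
  -- smoothness between the two primal points
  have h3 : f (A αstar) - f (A α) + (inner ℝ w (A α - A αstar) : ℝ)
      ≤ σ/(2*β) * (Ng (α - αstar))^2 := by
    have h2 := hsmooth (A α) (A αstar)
    have hNfb : (Nf (A αstar - A α))^2 ≤ σ * (Ng (α - αstar))^2 := by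
      have := hσA (αstar - α)
      rw [map_sub] at this
      have hsym : Ng (αstar - α) = Ng (α - αstar) := by
        have h := hNg.2.2.1 (-1) (α - αstar)
        rw [neg_one_smul] at h
        rw [show αstar - α = -(α - αstar) by abel, h]
        simp
      rw [hsym] at this
      exact this
    have hin : (inner ℝ w (A αstar - A α) : ℝ) = -(inner ℝ w (A α - A αstar) : ℝ) := by
      rw [← inner_neg_right]
      congr 1
      abel
    rw [hin] at h2
    have hNfb2 : 1/(2*β) * (Nf (A αstar - A α))^2 ≤ 1/(2*β) * (σ * (Ng (α - αstar))^2) :=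
      mul_le_mul_of_nonneg_left hNfb (by positivity)
    have hEq : 1/(2*β) * (σ * (Ng (α - αstar))^2) = σ/(2*β) * (Ng (α - αstar))^2 := by
      ring
    linarith [h2, hNfb2, hEq]
  -- key real inequality for each u in the conjugate sup
  set K0 : ℝ := σ/(β*μ) with hK0
  have hK00 : 0 ≤ K0 := by positivity
  have key : ∀ u : Euc n, ∀ c : ℝ, g u = (c : EReal) →
      -(inner ℝ w (A u) : ℝ) - c
        ≤ (1 + K0) * ((f (A α) + a) - (f (A αstar) + b)) - a - (inner ℝ w (A α) : ℝ) := by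
    intro u c hc
    have h1 := SCreal u c hc
    -- step (4)
    have h4 : (inner ℝ (ws - w) (A (u - αstar)) : ℝ) - μ/2 * (Ng (u - αstar))^2
        ≤ K0 * (f (A α) - f (A αstar) - (inner ℝ ws (A α - A αstar) : ℝ)) := by
      rcases eq_or_lt_of_le hσ0 with hσz | hσp
      · -- σ = 0
        have hAz : A (u - αstar) = 0 := by
          have := hσA (u - αstar)
          rw [← hσz] at this
          have h0 : Nf (A (u - αstar)) = 0 := by
            nlinarith [hNf.1 (A (u - αstar))]
          exact (hNf.2.1 _).mp h0
        rw [hAz, inner_zero_right]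
        have : K0 = 0 := by rw [hK0, ← hσz]; simp
        rw [this]
        have := hNg.1 (u - αstar)
        nlinarith
      · -- σ > 0
        set c0 : ℝ := β*μ/σ with hc0
        have hc0p : 0 < c0 := by positivity
        have e1 := stepD (c0 • A (u - αstar))
        rw [real_inner_smul_right, hNf.2.2.1, abs_of_pos hc0p] at e1
        have e2 : (Nf (A (u - αstar)))^2 ≤ σ * (Ng (u - αstar))^2 := hσA _
        set Bf : ℝ := f (A α) - f (A αstar) - (inner ℝ ws (A α - A αstar) : ℝ) with hBf
        set X : ℝ := (inner ℝ (ws - w) (A (u - αstar)) : ℝ) with hX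
        -- e1 : c0 * X ≤ Bf + 1/(2β) * (c0 * Nf(Ar))^2
        have e3 : c0 * X ≤ Bf + c0 * (μ/2 * (Ng (u - αstar))^2) := by
          have hid : 1/(2*β) * (c0 * Nf (A (u - αstar)))^2
              ≤ 1/(2*β) * (c0^2 * (σ * (Ng (u - αstar))^2)) := by
            have : (c0 * Nf (A (u - αstar)))^2 = c0^2 * (Nf (A (u - αstar)))^2 := by ring
            rw [this]
            apply mul_le_mul_of_nonneg_left _ (by positivity)
            exact mul_le_mul_of_nonneg_left e2 (by positivity)
          have hid2 : 1/(2*β) * (c0^2 * (σ * (Ng (u - αstar))^2))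
              = c0 * (μ/2 * (Ng (u - αstar))^2) := by
            rw [hc0]
            field_simp
          linarith [e1, hid, hid2.le, hid2.ge]
        have e4 : X ≤ (1/c0) * Bf + μ/2 * (Ng (u - αstar))^2 := by
          have := (mul_le_mul_iff_right₀ hc0p).mpr (le_refl X)
          have hrw : c0 * ((1/c0) * Bf + μ/2 * (Ng (u - αstar))^2)
              = Bf + c0 * (μ/2 * (Ng (u - αstar))^2) := by
            field_simp
          have := e3.trans_eq hrw.symm
          exact le_of_mul_le_mul_left this hc0p
        have hinv : (1/c0) = K0 := by
          rw [hc0, hK0]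
          field_simp
        rw [hinv] at e4
        linarith
    -- linear bookkeeping
    have eq5 : (inner ℝ (ws - w) (A (u - αstar)) : ℝ)
        = (inner ℝ ws (A u - A αstar) : ℝ) - (inner ℝ w (A u - A αstar) : ℝ) := by
      rw [map_sub, inner_sub_left]
    have eq2 : (inner ℝ w (A u - A αstar) : ℝ)
        = (inner ℝ w (A u) : ℝ) - (inner ℝ w (A αstar) : ℝ) := inner_sub_right _ _ _
    have eq1 : (inner ℝ w (A α - A αstar) : ℝ)
        = (inner ℝ w (A α) : ℝ) - (inner ℝ w (A αstar) : ℝ) := inner_sub_right _ _ _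
    have h5 : K0 * (μ/2 * (Ng (α - αstar))^2)
        ≤ K0 * (a - b + (inner ℝ ws (A α - A αstar) : ℝ)) :=
      mul_le_mul_of_nonneg_left (by linarith [SCα]) hK00
    have h5' : K0 * (μ/2 * (Ng (α - αstar))^2) = σ/(2*β) * (Ng (α - αstar))^2 := by
      rw [hK0]
      field_simp
    nlinarith [h1, h3, h4, h5, h5', eq1, eq2, eq5]
  -- assemble the EReal statement
  rw [← haeq, ← hbeq]
  set ip : ℝ := (inner ℝ w (A α) : ℝ) with hip
  set Dr : ℝ := (f (A α) + a) - (f (A αstar) + b) with hDr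
  have hRHS : ((1 + σ/(β*μ) : ℝ) : EReal)
      * ((((f (A α) : ℝ) : EReal) + ((a:ℝ) : EReal))
          - (((f (A αstar) : ℝ) : EReal) + ((b:ℝ) : EReal)))
      = (((1 + K0) * Dr : ℝ) : EReal) := by
    rw [hDr, hK0]
    norm_cast
  rw [hRHS]
  have main : econj g (-(ContinuousLinearMap.adjoint A) w)
      ≤ (((1 + K0) * Dr - a - ip : ℝ) : EReal) := by
    apply iSup_le
    intro u
    by_cases hu : g u = ⊤
    · rw [hu]
      rw [sub_eq_add_neg]
      simp
    · have hueq : (((g u).toReal : ℝ) : EReal) = g u := EReal.coe_toReal hu (hgbot u)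
      rw [← hueq, innfact w u, ← EReal.coe_sub, EReal.coe_le_coe_iff]
      exact key u ((g u).toReal) hueq.symm
  calc econj g (-(ContinuousLinearMap.adjoint A) w) + ((a:ℝ):EReal) + ((ip:ℝ):EReal)
      ≤ (((1 + K0) * Dr - a - ip : ℝ) : EReal) + ((a:ℝ):EReal) + ((ip:ℝ):EReal) := by
        exact add_le_add_left (add_le_add_left main _) _
    _ = (((1 + K0) * Dr : ℝ) : EReal) := by
        norm_cast
        ring
end
end

section
/- Linear rate transfer (strongly convex case): under the assumptions that f is (1/β)-smooth, g is μ-strongly convex (μ>0), σ := ‖A‖², and an algorithm produces iterates with E[D(α^t) - D(α⋆)] ≤ (1-C)^t · D₀ for some C ∈ (0,1], D₀ ≥ 0, it holds for every t ≥ (1/C)·log( D₀(σ/β + μ)/(μ ε) ) that E[G(α^t)] ≤ ε. -/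
open scoped BigOperators ENNReal
open MeasureTheory

noncomputable section

lemma IsNorm.zero {n} {N : Euc n → ℝ} (h : IsNorm N) : N 0 = 0 := (h.2.1 0).2 rfl

lemma IsNorm.neg_eq {n} {N : Euc n → ℝ} (h : IsNorm N) (x : Euc n) : N (-x) = N x := by
  have := h.2.2.1 (-1) x; simp at this; simpa using this

lemma abs_coord_le {n : ℕ} (x : Euc n) (i : Fin n) : |x i| ≤ ‖x‖ := by
  rw [EuclideanSpace.norm_eq]
  calc |x i| = Real.sqrt (‖x i‖ ^ 2) := by
        rw [Real.sqrt_sq_eq_abs]; simp [Real.norm_eq_abs, abs_abs]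
  _ ≤ _ := by
        apply Real.sqrt_le_sqrt
        exact Finset.single_le_sum (f := fun j => ‖x j‖ ^ 2) (fun j _ => sq_nonneg _) (Finset.mem_univ i)

lemma IsNorm.upper {n} {N : Euc n → ℝ} (h : IsNorm N) :
    ∃ Cu : ℝ, 0 ≤ Cu ∧ ∀ x, N x ≤ Cu * ‖x‖ := by
  classical
  refine ⟨∑ i : Fin n, N (EuclideanSpace.basisFun (Fin n) ℝ i),
    Finset.sum_nonneg fun i _ => h.1 _, fun x => ?_⟩
  have hx : x = ∑ i : Fin n, x i • (EuclideanSpace.basisFun (Fin n) ℝ i : Euc n) := by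
    have := (EuclideanSpace.basisFun (Fin n) ℝ).sum_repr x
    simpa using this.symm
  calc N x = N (∑ i : Fin n, x i • (EuclideanSpace.basisFun (Fin n) ℝ i : Euc n)) := by rw [← hx]
  _ ≤ ∑ i : Fin n, N (x i • (EuclideanSpace.basisFun (Fin n) ℝ i : Euc n)) :=
      Finset.le_sum_of_subadditive N h.zero.le h.2.2.2 _ _
  _ = ∑ i : Fin n, |x i| * N (EuclideanSpace.basisFun (Fin n) ℝ i) := by
      simp [h.2.2.1]
  _ ≤ ∑ i : Fin n, ‖x‖ * N (EuclideanSpace.basisFun (Fin n) ℝ i) := by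
      refine Finset.sum_le_sum fun i _ => ?_
      exact mul_le_mul_of_nonneg_right (abs_coord_le x i) (h.1 _)
  _ = (∑ i : Fin n, N (EuclideanSpace.basisFun (Fin n) ℝ i)) * ‖x‖ := by
      rw [← Finset.mul_sum, mul_comm]

lemma IsNorm.continuous {n} {N : Euc n → ℝ} (h : IsNorm N) : Continuous N := by
  obtain ⟨Cu, hCu0, hCu⟩ := h.upper
  refine (LipschitzWith.of_dist_le_mul (K := Cu.toNNReal) (f := N) fun x y => ?_).continuous
  have h1 : N x - N y ≤ N (x - y) := by
    have := h.2.2.2 (x - y) y; simpa using this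
  have h2 : N y - N x ≤ N (x - y) := by
    have := h.2.2.2 (y - x) x
    simp only [sub_add_cancel] at this
    calc N y - N x ≤ N (y - x) := by linarith
    _ = N (x - y) := by rw [← h.neg_eq, neg_sub]
  have : dist (N x) (N y) ≤ N (x - y) := by
    rw [Real.dist_eq]; exact abs_sub_le_iff.2 ⟨h1, h2⟩
  calc dist (N x) (N y) ≤ N (x - y) := this
  _ ≤ Cu * ‖x - y‖ := hCu _
  _ ≤ Cu.toNNReal * dist x y := by
      rw [dist_eq_norm]
      exact mul_le_mul_of_nonneg_right (by simp [Real.coe_toNNReal _ hCu0]) (norm_nonneg _)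

lemma IsNorm.lower {n} {N : Euc n → ℝ} (h : IsNorm N) :
    ∃ c : ℝ, 0 < c ∧ ∀ x, c * ‖x‖ ≤ N x := by
  by_cases hn : ∀ x : Euc n, x = 0
  · exact ⟨1, one_pos, fun x => by rw [hn x]; simp [h.zero]⟩
  push_neg at hn
  obtain ⟨x₀, hx₀⟩ := hn
  have hsp : (Metric.sphere (0 : Euc n) 1).Nonempty := by
    refine ⟨‖x₀‖⁻¹ • x₀, ?_⟩
    simp [norm_smul, abs_inv, inv_mul_cancel₀ (norm_ne_zero_iff.2 hx₀), abs_of_nonneg (norm_nonneg x₀)]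
  obtain ⟨z, hz, hmin⟩ := (isCompact_sphere (0 : Euc n) 1).exists_isMinOn hsp h.continuous.continuousOn
  have hz1 : ‖z‖ = 1 := by simpa using hz
  have hzne : z ≠ 0 := by intro e; rw [e] at hz1; simp at hz1
  have hNz : 0 < N z := by
    rcases lt_or_eq_of_le (h.1 z) with h' | h'
    · exact h'
    · exact absurd ((h.2.1 z).1 h'.symm) hzne
  refine ⟨N z, hNz, fun x => ?_⟩
  rcases eq_or_ne x 0 with rfl | hx
  · simp [h.zero]
  have hxn : (0:ℝ) < ‖x‖ := norm_pos_iff.2 hx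
  have hmem : ‖x‖⁻¹ • x ∈ Metric.sphere (0 : Euc n) 1 := by
    simp [norm_smul, abs_inv, inv_mul_cancel₀ hxn.ne', abs_of_nonneg (norm_nonneg x)]
  have := hmin hmem
  have hval : N (‖x‖⁻¹ • x) = ‖x‖⁻¹ * N x := by
    rw [h.2.2.1]; congr 1; rw [abs_inv, abs_of_nonneg (norm_nonneg x)]
  rw [isMinOn_iff] at hmin
  have h2 := hmin _ hmem
  rw [hval] at h2
  calc N z * ‖x‖ ≤ (‖x‖⁻¹ * N x) * ‖x‖ := by
        exact mul_le_mul_of_nonneg_right h2 (norm_nonneg x)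
  _ = N x := by field_simp

lemma IsNorm.bddAbove_dual {n} {N : Euc n → ℝ} (h : IsNorm N) (v : Euc n) :
    BddAbove {r : ℝ | ∃ u, N u ≤ 1 ∧ r = (inner ℝ v u : ℝ)} := by
  obtain ⟨c, hc, hlow⟩ := h.lower
  refine ⟨‖v‖ * c⁻¹, fun r hr => ?_⟩
  obtain ⟨u, hu, rfl⟩ := hr
  calc (inner ℝ v u : ℝ) ≤ ‖v‖ * ‖u‖ := real_inner_le_norm v u
  _ ≤ ‖v‖ * c⁻¹ := by
      refine mul_le_mul_of_nonneg_left ?_ (norm_nonneg v)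
      have h1 : c * ‖u‖ ≤ 1 := (hlow u).trans hu
      calc ‖u‖ = c⁻¹ * (c * ‖u‖) := by field_simp
      _ ≤ c⁻¹ * 1 := mul_le_mul_of_nonneg_left h1 (inv_nonneg.2 hc.le)
      _ = c⁻¹ := mul_one _

lemma IsNorm.dual_nonneg {n} {N : Euc n → ℝ} (h : IsNorm N) (v : Euc n) :
    0 ≤ dualNorm N v := by
  apply le_csSup (h.bddAbove_dual v)
  exact ⟨0, by simp [h.zero], by simp⟩

lemma IsNorm.inner_le_dual {n} {N : Euc n → ℝ} (h : IsNorm N) (v x : Euc n) :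
    (inner ℝ v x : ℝ) ≤ dualNorm N v * N x := by
  rcases eq_or_ne x 0 with rfl | hx
  · simp [h.zero]
  have hNx : 0 < N x := by
    rcases lt_or_eq_of_le (h.1 x) with h' | h'
    · exact h'
    · exact absurd ((h.2.1 x).1 h'.symm) hx
  have hmem : (inner ℝ v ((N x)⁻¹ • x) : ℝ) ∈ {r : ℝ | ∃ u, N u ≤ 1 ∧ r = (inner ℝ v u : ℝ)} := by
    refine ⟨(N x)⁻¹ • x, ?_, rfl⟩
    rw [h.2.2.1, abs_inv, abs_of_pos hNx, inv_mul_cancel₀ hNx.ne']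
  have := le_csSup (h.bddAbove_dual v) hmem
  rw [real_inner_smul_right] at this
  calc (inner ℝ v x : ℝ) = ((N x)⁻¹ * (inner ℝ v x : ℝ)) * N x := by field_simp
  _ ≤ dualNorm N v * N x := mul_le_mul_of_nonneg_right this hNx.le

lemma grad_ineq {d : ℕ} {f : Euc d → ℝ} (hfc : ConvexOn ℝ Set.univ f)
    {f' : Euc d → Euc d} (hf' : ∀ x, HasGradientAt f (f' x) x) (x y : Euc d) :
    f x + (inner ℝ (f' x) (y - x) : ℝ) ≤ f y := by
  set φ : ℝ → ℝ := fun t => f (x + t • (y - x)) with hφ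
  have hL : ∀ t : ℝ, HasDerivAt (fun s : ℝ => x + s • (y - x)) (y - x) t := by
    intro t
    simpa using ((hasDerivAt_id t).smul_const (y - x)).const_add x
  have hD : HasDerivAt φ (inner ℝ (f' x) (y - x) : ℝ) 0 := by
    have h1 := (hf' x).hasFDerivAt
    have h2 : HasDerivAt φ ((InnerProductSpace.toDual ℝ (Euc d) (f' x)) (y - x)) 0 := by
      have h1' : HasFDerivAt f ((InnerProductSpace.toDual ℝ (Euc d)) (f' x)) (x + (0:ℝ) • (y - x)) := by
        simpa using h1
      have := h1'.comp_hasDerivAt (0:ℝ) (hL 0)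
      exact this
    simpa using h2
  have hslope : ∀ t : ℝ, t ∈ Set.Ioc (0:ℝ) 1 → (φ t - φ 0) / t ≤ f y - f x := by
    intro t ht
    have hconv := hfc.2 (Set.mem_univ x) (Set.mem_univ y) (by linarith [ht.2] : (0:ℝ) ≤ 1 - t)
      ht.1.le (by ring)
    have hpt : (1 - t) • x + t • y = x + t • (y - x) := by
      simp [smul_sub, sub_smul]; abel
    rw [hpt] at hconv
    have : φ t ≤ (1 - t) * f x + t * f y := by simpa [hφ, smul_eq_mul] using hconv
    have hφ0 : φ 0 = f x := by simp [hφ]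
    rw [div_le_iff₀ ht.1, hφ0]
    nlinarith [ht.1]
  have htend : Filter.Tendsto (fun t => (φ t - φ 0) / t) (nhdsWithin 0 (Set.Ioi 0))
      (nhds (inner ℝ (f' x) (y - x) : ℝ)) := by
    have := hD.hasDerivWithinAt (s := Set.Ioi 0)
    have h2 := (hasDerivWithinAt_iff_tendsto_slope.1 this)
    have : Filter.Tendsto (slope φ 0) (nhdsWithin 0 (Set.Ioi 0)) (nhds (inner ℝ (f' x) (y - x) : ℝ)) := by
      apply h2.mono_left
      apply nhdsWithin_mono
      intro z hz; exact ⟨hz, by intro e; exact (ne_of_gt hz) (by simpa using e)⟩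
    refine this.congr' ?_
    filter_upwards [self_mem_nhdsWithin] with t ht
    rw [slope_def_field]
    simp [div_eq_inv_mul]
  have : (inner ℝ (f' x) (y - x) : ℝ) ≤ f y - f x := by
    refine le_of_tendsto htend ?_
    filter_upwards [Ioc_mem_nhdsGT_of_mem (Set.left_mem_Ico.2 one_pos)] with t ht
    exact hslope t ht
  linarith

lemma cocoercive {d : ℕ} {Nf : Euc d → ℝ} (hNf : IsNorm Nf) {f : Euc d → ℝ}
    (hfc : ConvexOn ℝ Set.univ f) {f' : Euc d → Euc d} (hf' : ∀ x, HasGradientAt f (f' x) x)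
    {β : ℝ} (hβ : 0 < β)
    (hsmooth : ∀ x y, f y ≤ f x + (inner ℝ (f' x) (y - x) : ℝ) + 1/(2*β) * (Nf (y-x))^2)
    (x y : Euc d) :
    dualNorm Nf (f' x - f' y) ^ 2 ≤ 2 / β * (f x - f y - (inner ℝ (f' y) (x - y) : ℝ)) := by
  set D : ℝ := f x - f y - (inner ℝ (f' y) (x - y) : ℝ) with hD
  have hD0 : 0 ≤ D := by
    have := grad_ineq hfc hf' y x
    simp only [hD]; linarith
  have harg : 0 ≤ 2 * D / β := by positivity
  have hsup : dualNorm Nf (f' x - f' y) ≤ Real.sqrt (2 * D / β) := by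
    apply csSup_le
    · exact ⟨0, 0, by simp [(hNf.2.1 0).2 rfl], by simp⟩
    intro r hr
    obtain ⟨u, hu, rfl⟩ := hr
    set s : ℝ := (inner ℝ (f' x - f' y) u : ℝ) with hs
    rcases le_or_gt s 0 with hsneg | hspos
    · exact hsneg.trans (Real.sqrt_nonneg _)
    apply Real.le_sqrt_of_sq_le
    set h : Euc d := x + (-(β * s)) • u with hh
    have h1 := grad_ineq hfc hf' y h
    have h2 := hsmooth x h
    have hhx : h - x = (-(β * s)) • u := by simp [hh]
    have hNfhx : Nf (h - x) = β * s * Nf u := by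
      rw [hhx, hNf.2.2.1, abs_neg, abs_of_pos (by positivity)]
    have hhy : h - y = (x - y) + (-(β * s)) • u := by simp [hh]; abel
    have hiy : (inner ℝ (f' y) (h - y) : ℝ)
        = (inner ℝ (f' y) (x - y) : ℝ) - β * s * (inner ℝ (f' y) u : ℝ) := by
      rw [hhy, inner_add_right, real_inner_smul_right]; ring
    have hix : (inner ℝ (f' x) (h - x) : ℝ) = - (β * s) * (inner ℝ (f' x) u : ℝ) := by
      rw [hhx, real_inner_smul_right]
    have hsu : (inner ℝ (f' x) u : ℝ) - (inner ℝ (f' y) u : ℝ) = s := by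
      rw [hs, inner_sub_left]
    have hNfu2 : (Nf (h - x))^2 ≤ (β * s)^2 := by
      rw [hNfhx]
      have h0 : 0 ≤ β * s := by positivity
      have h3 := hNf.1 u
      nlinarith [sq_nonneg (β*s), mul_le_one₀ hu h3 hu]
    have hkey : β * s^2 / 2 ≤ D := by
      rw [hiy] at h1
      rw [hix] at h2
      have hc : 1/(2*β) * (Nf (h-x))^2 ≤ 1/(2*β) * (β*s)^2 := by
        apply mul_le_mul_of_nonneg_left hNfu2 (by positivity)
      have hβs : 1/(2*β) * (β*s)^2 = β * s^2/2 := by field_simp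
      nlinarith
    rw [le_div_iff₀ hβ]; nlinarith
  have hnn : 0 ≤ dualNorm Nf (f' x - f' y) := hNf.dual_nonneg _
  calc dualNorm Nf (f' x - f' y) ^ 2 ≤ Real.sqrt (2*D/β) ^ 2 := by
        exact pow_le_pow_left₀ hnn hsup 2
  _ = 2 * D / β := Real.sq_sqrt harg
  _ = 2 / β * D := by ring

lemma toe_le_ofReal {x : EReal} {r : ℝ} (h : x ≤ (r : EReal)) : toe x ≤ ENNReal.ofReal r := by
  unfold toe
  have hx : x ≠ ⊤ := by
    intro e; rw [e] at h
    exact absurd h (by simp)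
  rw [if_neg hx]
  induction x using EReal.rec with
  | bot => simp
  | coe y =>
      simp only [EReal.toReal_coe]
      exact ENNReal.ofReal_le_ofReal (EReal.coe_le_coe_iff.1 h)
  | top => exact absurd rfl hx

set_option maxHeartbeats 2000000 in

set_option maxHeartbeats 2000000 in
theorem keylem {d n : ℕ} (A : Euc n →L[ℝ] Euc d)
    (Nf : Euc d → ℝ) (hNf : IsNorm Nf) (Ng : Euc n → ℝ) (hNg : IsNorm Ng)
    (f : Euc d → ℝ) (hfc : ConvexOn ℝ Set.univ f)
    (f' : Euc d → Euc d) (hf' : ∀ x, HasGradientAt f (f' x) x)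
    (β : ℝ) (hβ : 0 < β)
    (hsmooth : ∀ x y, f y ≤ f x + (inner ℝ (f' x) (y - x) : ℝ)
        + 1 / (2 * β) * (Nf (y - x)) ^ 2)
    (g : Euc n → EReal) (hg : EProper g) (hgc : EConvex g)
    (μ : ℝ) (hμ : 0 < μ)
    (hgsc : ∀ x u, ESubgradAt g x u → ∀ y,
        g x + (((inner ℝ u (y - x) : ℝ) + μ / 2 * (Ng (y - x)) ^ 2 : ℝ) : EReal) ≤ g y)
    (σ : ℝ) (hσ0 : 0 ≤ σ) (hσA : ∀ x, (Nf (A x)) ^ 2 ≤ σ * (Ng x) ^ 2)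
    (αstar : Euc n)
    (hstar : ∀ α : Euc n,
        ((f (A αstar) : ℝ) : EReal) + g αstar ≤ ((f (A α) : ℝ) : EReal) + g α)
    (α : Euc n) :
    toe (econj g (-(ContinuousLinearMap.adjoint A) (f' (A α))) + g α
        + ((inner ℝ (f' (A α)) (A α) : ℝ) : EReal))
      ≤ ENNReal.ofReal (1 + σ / (β * μ))
        * toe ((((f (A α) : ℝ) : EReal) + g α) - (((f (A αstar) : ℝ) : EReal) + g αstar)) := by
  -- g αstar is finite
  have hsb := hg.1 αstar
  have hst : g αstar ≠ ⊤ := by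
    obtain ⟨x₀, hx₀⟩ := hg.2
    intro e
    have h1 := hstar x₀
    rw [e, EReal.coe_add_top] at h1
    have hx0b := hg.1 x₀
    have hx0 : g x₀ = ((g x₀).toReal : EReal) := (EReal.coe_toReal hx₀ hx0b).symm
    rw [hx0, ← EReal.coe_add] at h1
    exact EReal.coe_ne_top _ (top_le_iff.1 h1)
  set gs : ℝ := (g αstar).toReal with hgsdef
  have hgs : g αstar = (gs : EReal) := (EReal.coe_toReal hst hsb).symm
  set w : Euc d := f' (A α) with hw
  set ws : Euc d := f' (A αstar) with hws
  set vs : Euc n := -(ContinuousLinearMap.adjoint A) ws with hvs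
  set v : Euc n := -(ContinuousLinearMap.adjoint A) w with hv
  have hadj : ∀ (z : Euc d) (u : Euc n), (inner ℝ ((ContinuousLinearMap.adjoint A) z) u : ℝ) = (inner ℝ z (A u) : ℝ) :=
    fun z u => ContinuousLinearMap.adjoint_inner_left A u z
  -- norm comparison
  have hσA' : ∀ x : Euc n, Nf (A x) ≤ Real.sqrt σ * Ng x := by
    intro x
    have h1 : Nf (A x) = Real.sqrt ((Nf (A x))^2) := (Real.sqrt_sq (hNf.1 _)).symm
    rw [h1, ← Real.sqrt_sq (hNg.1 x), ← Real.sqrt_mul hσ0]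
    exact Real.sqrt_le_sqrt (by simpa using hσA x)
  -- subgradient at αstar
  have hsub : ESubgradAt g αstar vs := by
    intro y
    by_cases hytop : g y = ⊤
    · rw [hytop]; exact le_top
    have hyb := hg.1 y
    set gy : ℝ := (g y).toReal with hgydef
    have hgy : g y = (gy : EReal) := (EReal.coe_toReal hytop hyb).symm
    rw [hgy, hgs, ← EReal.coe_add, EReal.coe_le_coe_iff]
    set z : Euc d := A y - A αstar with hz
    have hinner : (inner ℝ vs (y - αstar) : ℝ) = -(inner ℝ ws z : ℝ) := by
      rw [hvs, inner_neg_left, hadj, map_sub]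
    rw [hinner]
    have hkey : ∀ s : ℝ, s ∈ Set.Ioc (0:ℝ) 1 →
        gs ≤ gy + (inner ℝ ws z : ℝ) + s * (1/(2*β) * (Nf z)^2) := by
      intro s hs
      set ys : Euc n := αstar + s • (y - αstar) with hys
      have hconv : g ys ≤ ((1-s : ℝ) : EReal) * g αstar + ((s:ℝ) : EReal) * g y := by
        have hpt : (1-s) • αstar + s • y = ys := by
          rw [hys]; module
        have := hgc αstar y (1-s) s (by linarith [hs.2]) hs.1.le (by ring)
        rwa [hpt] at this
      rw [hgs, hgy, ← EReal.coe_mul, ← EReal.coe_mul, ← EReal.coe_add] at hconv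
      have hstar2 := hstar ys
      have hAys : A ys - A αstar = s • z := by
        rw [hys, hz]; simp only [map_add, ContinuousLinearMap.map_smul, map_sub]; module
      have hfys : f (A ys) ≤ f (A αstar) + s * (inner ℝ ws z : ℝ) + s^2 * (1/(2*β) * (Nf z)^2) := by
        have := hsmooth (A αstar) (A ys)
        rw [hAys] at this
        rw [real_inner_smul_right] at this
        have hNfs : Nf (s • z) = s * Nf z := by
          rw [hNf.2.2.1, abs_of_pos hs.1]
        rw [hNfs] at this
        calc f (A ys) ≤ f (A αstar) + s * (inner ℝ ws z : ℝ) + 1/(2*β) * (s * Nf z)^2 := this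
        _ = f (A αstar) + s * (inner ℝ ws z : ℝ) + s^2 * (1/(2*β) * (Nf z)^2) := by ring
      -- combine through hstar2
      have hgys_le : g ys ≤ (((1-s) * gs + s * gy : ℝ) : EReal) := hconv
      have h3 : ((f (A αstar) : ℝ) : EReal) + g αstar ≤ ((f (A ys) : ℝ) : EReal) + g ys :=
        hstar2
      have h4 : ((f (A αstar) : ℝ) : EReal) + g αstar
          ≤ (((f (A ys) + ((1-s) * gs + s * gy)) : ℝ) : EReal) := by
        calc ((f (A αstar) : ℝ) : EReal) + g αstar ≤ ((f (A ys) : ℝ) : EReal) + g ys := h3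
        _ ≤ ((f (A ys) : ℝ) : EReal) + (((1-s) * gs + s * gy : ℝ) : EReal) := by
            exact add_le_add_right hgys_le _
        _ = _ := by rw [← EReal.coe_add]
      rw [hgs, ← EReal.coe_add, EReal.coe_le_coe_iff] at h4
      have h5 : f (A αstar) + gs ≤ f (A ys) + ((1-s) * gs + s * gy) := h4
      have h6 : s * gs ≤ s * ((inner ℝ ws z : ℝ)) + s^2 * (1/(2*β) * (Nf z)^2) + s * gy := by
        nlinarith
      have h7 : gs ≤ (inner ℝ ws z : ℝ) + s * (1/(2*β) * (Nf z)^2) + gy := by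
        have hsp := hs.1
        by_contra hcon
        push_neg at hcon
        have := mul_lt_mul_of_pos_left hcon hsp
        nlinarith
      linarith
    -- limit s → 0⁺
    have htend : Filter.Tendsto (fun s : ℝ => gy + (inner ℝ ws z : ℝ) + s * (1/(2*β) * (Nf z)^2))
        (nhdsWithin 0 (Set.Ioi 0)) (nhds (gy + (inner ℝ ws z : ℝ) + 0)) := by
      apply Filter.Tendsto.mono_left _ nhdsWithin_le_nhds
      have : Filter.Tendsto (fun s : ℝ => s * (1/(2*β) * (Nf z)^2)) (nhds 0)
          (nhds (0 * (1/(2*β) * (Nf z)^2))) := (continuous_id.mul continuous_const).tendsto 0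
      simpa using (tendsto_const_nhds.add this)
    have : gs ≤ gy + (inner ℝ ws z : ℝ) + 0 := by
      refine ge_of_tendsto htend ?_
      filter_upwards [Ioc_mem_nhdsGT_of_mem (Set.left_mem_Ico.2 one_pos)] with s hs
      exact hkey s hs
    linarith
  have hSC := hgsc αstar vs hsub
  have hSCr : ∀ (y : Euc n) (gy : ℝ), g y = (gy : EReal) →
      gs + ((inner ℝ vs (y - αstar) : ℝ) + μ/2 * (Ng (y - αstar))^2) ≤ gy := by
    intro y gy hy
    have h0 := hSC y
    rw [hy, hgs, ← EReal.coe_add, EReal.coe_le_coe_iff] at h0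
    exact h0
  set η : ℝ := dualNorm Nf (w - ws) with hη
  have hη0 : 0 ≤ η := hNf.dual_nonneg _
  have hcoco : η^2 ≤ 2/β * (f (A α) - f (A αstar) - (inner ℝ ws (A α - A αstar) : ℝ)) :=
    cocoercive hNf hfc hf' hβ hsmooth (A α) (A αstar)
  set R : ℝ := (inner ℝ v αstar : ℝ) - gs + σ * η^2/(2*μ) with hR
  have hivs : (inner ℝ v αstar : ℝ) = -(inner ℝ w (A αstar) : ℝ) := by
    rw [hv, inner_neg_left, hadj]
  have hconj : econj g v ≤ (R : EReal) := by
    apply iSup_le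
    intro u
    by_cases hutop : g u = ⊤
    · rw [hutop, EReal.sub_top]; exact bot_le
    · have hub := hg.1 u
      have hgu : g u = (((g u).toReal : ℝ) : EReal) := (EReal.coe_toReal hutop hub).symm
      set gu : ℝ := (g u).toReal with hgu'
      rw [hgu, ← EReal.coe_sub, EReal.coe_le_coe_iff]
      set b : ℝ := Ng (u - αstar) with hb
      have h1 := hSCr u gu hgu
      have hivu : (inner ℝ v u : ℝ) = -(inner ℝ w (A u) : ℝ) := by
        rw [hv, inner_neg_left, hadj]
      have hivsu : (inner ℝ vs (u - αstar) : ℝ) = -(inner ℝ ws (A u - A αstar) : ℝ) := by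
        rw [hvs, inner_neg_left, hadj, map_sub]
      have hcross : (inner ℝ w (A αstar) : ℝ) - (inner ℝ w (A u) : ℝ)
          + (inner ℝ ws (A u - A αstar) : ℝ) ≤ Real.sqrt σ * η * b := by
        have e1 : (inner ℝ w (A αstar) : ℝ) - (inner ℝ w (A u) : ℝ) + (inner ℝ ws (A u - A αstar) : ℝ)
            = (inner ℝ (w - ws) (A (αstar - u)) : ℝ) := by
          rw [map_sub, inner_sub_left, inner_sub_right, inner_sub_right, inner_sub_right]; ring
        rw [e1]
        calc (inner ℝ (w - ws) (A (αstar - u)) : ℝ) ≤ η * Nf (A (αstar - u)) :=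
              hNf.inner_le_dual _ _
        _ ≤ η * (Real.sqrt σ * Ng (αstar - u)) := mul_le_mul_of_nonneg_left (hσA' _) hη0
        _ = Real.sqrt σ * η * b := by
            rw [hb, show αstar - u = -(u - αstar) by abel, hNg.neg_eq]; ring
      have hamgm : Real.sqrt σ * η * b ≤ μ/2 * b^2 + σ * η^2/(2*μ) := by
        have hkey : 2*μ*(Real.sqrt σ * η * b) ≤ 2*μ*(μ/2 * b^2 + σ * η^2/(2*μ)) := by
          have e : 2*μ*(μ/2 * b^2 + σ * η^2/(2*μ)) = μ^2*b^2 + σ*η^2 := by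
            field_simp
          rw [e]
          nlinarith [sq_nonneg (Real.sqrt σ * η - μ * b), Real.sq_sqrt hσ0]
        exact le_of_mul_le_mul_left hkey (by positivity)
      rw [hR, hivu, hivs]
      rw [hivsu] at h1
      linarith
  -- case split on g α
  by_cases hatop : g α = ⊤
  · -- degenerate: both sides ⊤
    have hlb : (((inner ℝ v αstar : ℝ) - gs : ℝ) : EReal) ≤ econj g v := by
      have e2 : (((inner ℝ v αstar : ℝ) - gs : ℝ) : EReal)
          = ((inner ℝ v αstar : ℝ) : EReal) - g αstar := by
        rw [hgs, ← EReal.coe_sub]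
      rw [e2]
      exact le_iSup (fun u => ((inner ℝ v u : ℝ) : EReal) - g u) αstar
    have hnb : econj g v ≠ ⊥ := by
      intro e
      rw [e] at hlb
      exact absurd hlb (not_le.mpr (EReal.bot_lt_coe _))
    have hXtop : econj g v + g α + ((inner ℝ w (A α) : ℝ) : EReal) = ⊤ := by
      rw [hatop, EReal.add_top_of_ne_bot hnb, EReal.top_add_coe]
    have hDtop : (((f (A α) : ℝ) : EReal) + g α) - (((f (A αstar) : ℝ) : EReal) + g αstar) = ⊤ := by
      rw [hatop, EReal.coe_add_top, hgs, ← EReal.coe_add, EReal.top_sub_coe]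
    have htoetop : toe ⊤ = ⊤ := by unfold toe; simp
    rw [hXtop, hDtop, htoetop]
    have hpos : (0:ℝ) < 1 + σ/(β*μ) := by positivity
    rw [ENNReal.mul_top (ENNReal.ofReal_pos.2 hpos).ne']
  · have hab := hg.1 α
    have hga : g α = (((g α).toReal : ℝ) : EReal) := (EReal.coe_toReal hatop hab).symm
    set ga : ℝ := (g α).toReal with hga'
    set fa : ℝ := f (A α) with hfa
    set fs : ℝ := f (A αstar) with hfs
    set ip : ℝ := (inner ℝ w (A α) : ℝ) with hip
    set ips : ℝ := (inner ℝ w (A αstar) : ℝ) with hips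
    set q : ℝ := (Ng (α - αstar))^2 with hq
    set δ : ℝ := fa + ga - (fs + gs) with hδ
    -- bregman smoothness bound
    have hDf : fs - fa - (ips - ip) ≤ σ/(2*β) * q := by
      have h2 := hsmooth (A α) (A αstar)
      have e3 : A αstar - A α = A (αstar - α) := (map_sub A αstar α).symm
      have e4 : (inner ℝ w (A αstar - A α) : ℝ) = ips - ip := by
        rw [inner_sub_right]
      have e5 : (Nf (A αstar - A α))^2 ≤ σ * q := by
        rw [e3]
        calc (Nf (A (αstar - α)))^2 ≤ σ * (Ng (αstar - α))^2 := hσA _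
        _ = σ * q := by
            rw [hq, show αstar - α = -(α - αstar) by abel, hNg.neg_eq]
      rw [e4] at h2
      have : 1/(2*β) * (Nf (A αstar - A α))^2 ≤ 1/(2*β) * (σ * q) :=
        mul_le_mul_of_nonneg_left e5 (by positivity)
      have e6 : 1/(2*β) * (σ * q) = σ/(2*β) * q := by ring
      rw [← hfa, ← hfs] at h2
      nlinarith
    -- strong convexity lower bound on δ
    have hδlb : (fa - fs - (inner ℝ ws (A α - A αstar) : ℝ)) + μ/2 * q ≤ δ := by
      have h1 := hSCr α ga hga
      have hivsa : (inner ℝ vs (α - αstar) : ℝ) = -(inner ℝ ws (A α - A αstar) : ℝ) := by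
        rw [hvs, inner_neg_left, hadj, map_sub]
      rw [hivsa] at h1
      rw [hδ, hq] at *
      linarith
    set Df' : ℝ := fa - fs - (inner ℝ ws (A α - A αstar) : ℝ) with hDf'
    have t1 : σ/(2*μ) * η^2 ≤ σ/(2*μ) * (2/β * Df') :=
      mul_le_mul_of_nonneg_left hcoco (by positivity)
    have t1e : σ/(2*μ) * (2/β * Df') = σ/(β*μ) * Df' := by
      field_simp
    have t2 : σ/(β*μ) * (Df' + μ/2 * q) ≤ σ/(β*μ) * δ :=
      mul_le_mul_of_nonneg_left (by linarith) (by positivity)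
    have t3 : σ/(β*μ) * (Df' + μ/2 * q) = σ/(β*μ) * Df' + σ/(2*β) * q := by
      field_simp
    have hreal : R + ga + ip ≤ (1 + σ/(β*μ)) * δ := by
      rw [hR, hivs]
      have e7 : σ * η^2/(2*μ) = σ/(2*μ) * η^2 := by ring
      nlinarith [t1, t2, hDf]
    -- assemble
    have hXle : econj g v + g α + ((inner ℝ w (A α) : ℝ) : EReal)
        ≤ (((1 + σ/(β*μ)) * δ : ℝ) : EReal) := by
      calc econj g v + g α + ((inner ℝ w (A α) : ℝ) : EReal)
          ≤ (R : EReal) + ((ga : ℝ) : EReal) + ((inner ℝ w (A α) : ℝ) : EReal) := by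
            apply add_le_add _ le_rfl
            exact add_le_add hconj (le_of_eq hga)
      _ = (((R + ga + ip : ℝ)) : EReal) := by
            rw [hip]; norm_cast
      _ ≤ _ := EReal.coe_le_coe_iff.2 hreal
    have hDeq : (((f (A α) : ℝ) : EReal) + g α) - (((f (A αstar) : ℝ) : EReal) + g αstar)
        = ((δ : ℝ) : EReal) := by
      rw [hga, hgs, ← hfa, ← hfs, ← EReal.coe_add, ← EReal.coe_add, ← EReal.coe_sub, hδ]
    rw [hDeq]
    have htoe2 : toe ((δ : ℝ) : EReal) = ENNReal.ofReal δ := by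
      unfold toe
      rw [if_neg (EReal.coe_ne_top _)]
      simp
    rw [htoe2, ← ENNReal.ofReal_mul (by positivity : (0:ℝ) ≤ 1 + σ/(β*μ))]
    exact toe_le_ofReal hXle


/-- linear rate transfer, strongly convex case: if an algorithm's (random)
iterates satisfy `E[D(α^t) - D(α⋆)] ≤ (1-C)^t D₀`, then for every
`t ≥ (1/C) log(D₀(σ/β + μ)/(μ ε))` one has `E[G(α^t)] ≤ ε`. -/
theorem stmt9 {d n : ℕ} (A : Euc n →L[ℝ] Euc d)
    (Nf : Euc d → ℝ) (hNf : IsNorm Nf) (Ng : Euc n → ℝ) (hNg : IsNorm Ng)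
    (f : Euc d → ℝ) (hfc : ConvexOn ℝ Set.univ f)
    (f' : Euc d → Euc d) (hf' : ∀ x, HasGradientAt f (f' x) x)
    (β : ℝ) (hβ : 0 < β)
    (hsmooth : ∀ x y, f y ≤ f x + (inner ℝ (f' x) (y - x) : ℝ)
        + 1 / (2 * β) * (Nf (y - x)) ^ 2)
    (g : Euc n → EReal) (hg : EProper g) (hgc : EConvex g)
    (μ : ℝ) (hμ : 0 < μ)
    (hgsc : ∀ x u, ESubgradAt g x u → ∀ y,
        g x + (((inner ℝ u (y - x) : ℝ) + μ / 2 * (Ng (y - x)) ^ 2 : ℝ) : EReal) ≤ g y)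
    (σ : ℝ) (hσ0 : 0 ≤ σ) (hσA : ∀ x, (Nf (A x)) ^ 2 ≤ σ * (Ng x) ^ 2)
    (αstar : Euc n)
    (hstar : ∀ α : Euc n,
        ((f (A αstar) : ℝ) : EReal) + g αstar ≤ ((f (A α) : ℝ) : EReal) + g α)
    {Ω : Type} [MeasurableSpace Ω] (P : Measure Ω) [IsProbabilityMeasure P]
    (a : ℕ → Ω → Euc n)
    (C D₀ : ℝ) (hC0 : 0 < C) (hC1 : C ≤ 1) (hD0 : 0 ≤ D₀)
    (hrate : ∀ t : ℕ,
      ∫⁻ ω, toe ((((f (A (a t ω)) : ℝ) : EReal) + g (a t ω))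
          - (((f (A αstar) : ℝ) : EReal) + g αstar)) ∂P
        ≤ ENNReal.ofReal ((1 - C) ^ t * D₀))
    (ε : ℝ) (hε : 0 < ε) (t : ℕ)
    (ht : 1 / C * Real.log (D₀ * (σ / β + μ) / (μ * ε)) ≤ (t : ℝ)) :
    ∫⁻ ω, toe (econj g (-(ContinuousLinearMap.adjoint A) (f' (A (a t ω)))) + g (a t ω)
        + ((inner ℝ (f' (A (a t ω))) (A (a t ω)) : ℝ) : EReal)) ∂P
      ≤ ENNReal.ofReal ε := by
  have hfinal : (1 + σ / (β * μ)) * ((1 - C) ^ t * D₀) ≤ ε := by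
    set k : ℝ := 1 + σ / (β * μ) with hkdef
    have hkpos : 0 < k := by positivity
    have hkform : (σ / β + μ) / μ = k := by
      rw [hkdef]; field_simp; ring
    rcases eq_or_lt_of_le hD0 with hD | hD
    · rw [← hD]; simpa using hε.le
    · set L : ℝ := D₀ * (σ / β + μ) / (μ * ε) with hLdef
      have hLk : L = k * D₀ / ε := by
        rw [hLdef, ← hkform]; field_simp
      have hLpos : 0 < L := by
        rw [hLk]; positivity
      have hlog : Real.log L ≤ C * t := by
        have := mul_le_mul_of_nonneg_left ht hC0.le
        rw [← mul_assoc, mul_one_div, div_self hC0.ne', one_mul] at this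
        exact this
      have h1C : (0:ℝ) ≤ 1 - C := by linarith
      have hpow : (1 - C) ^ t ≤ Real.exp (-(C * t)) := by
        calc (1 - C) ^ t ≤ (Real.exp (-C)) ^ t := by
              apply pow_le_pow_left₀ h1C
              linarith [Real.add_one_le_exp (-C)]
        _ = Real.exp (-(C * t)) := by
              rw [← Real.exp_nat_mul]; congr 1; ring
      have hexp : Real.exp (-(C * t)) ≤ 1 / L := by
        rw [Real.exp_neg, one_div]
        apply inv_anti₀ hLpos
        calc L = Real.exp (Real.log L) := (Real.exp_log hLpos).symm
        _ ≤ Real.exp (C * t) := Real.exp_le_exp.2 hlog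
      have hpow' : (1 - C) ^ t ≤ 1 / L := hpow.trans hexp
      have hfrac : k * D₀ / L = ε := by
        rw [hLk]; field_simp
      calc k * ((1 - C) ^ t * D₀) ≤ k * (1 / L * D₀) := by
            apply mul_le_mul_of_nonneg_left _ hkpos.le
            exact mul_le_mul_of_nonneg_right hpow' hD.le
      _ = k * D₀ / L := by ring
      _ = ε := hfrac
  calc ∫⁻ ω, toe (econj g (-(ContinuousLinearMap.adjoint A) (f' (A (a t ω)))) + g (a t ω)
        + ((inner ℝ (f' (A (a t ω))) (A (a t ω)) : ℝ) : EReal)) ∂P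
      ≤ ∫⁻ ω, ENNReal.ofReal (1 + σ / (β * μ))
          * toe ((((f (A (a t ω)) : ℝ) : EReal) + g (a t ω))
            - (((f (A αstar) : ℝ) : EReal) + g αstar)) ∂P := by
        apply lintegral_mono
        intro ω
        exact keylem A Nf hNf Ng hNg f hfc f' hf' β hβ hsmooth g hg hgc μ hμ hgsc σ hσ0 hσA
          αstar hstar (a t ω)
  _ = ENNReal.ofReal (1 + σ / (β * μ)) * ∫⁻ ω, toe ((((f (A (a t ω)) : ℝ) : EReal) + g (a t ω))
            - (((f (A αstar) : ℝ) : EReal) + g αstar)) ∂P :=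
        lintegral_const_mul' _ _ ENNReal.ofReal_ne_top
  _ ≤ ENNReal.ofReal (1 + σ / (β * μ)) * ENNReal.ofReal ((1 - C) ^ t * D₀) :=
        mul_le_mul_right (hrate t) _
  _ = ENNReal.ofReal ((1 + σ / (β * μ)) * ((1 - C) ^ t * D₀)) :=
        (ENNReal.ofReal_mul (by positivity)).symm
  _ ≤ ENNReal.ofReal ε := ENNReal.ofReal_le_ofReal hfinal
end
end

section
/- Lipschitzing trick for L1: let g(α) := λ‖α‖₁ on ℝ^n with λ > 0, and define ḡ(α) := g(α) if ‖α‖₁ ≤ B and +∞ otherwise. Then the convex conjugate of ḡ is ḡ*(u) = B·max{0, ‖u‖_∞ - λ}. -/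
open scoped BigOperators ENNReal
open MeasureTheory

noncomputable section

/-- Lipschitzing trick for L1: the conjugate of
`ḡ(α) = λ‖α‖₁` restricted to the ball `‖α‖₁ ≤ B` (and `+∞` outside)
is `ḡ*(u) = B max{0, ‖u‖_∞ - λ}`. -/
theorem stmt12 {n : ℕ} (lam B : ℝ) (hlam : 0 < lam) (hB : 0 < B) (u : Euc n) :
    econj (fun α : Euc n =>
        if (∑ i, |α i|) ≤ B then ((lam * ∑ i, |α i| : ℝ) : EReal) else (⊤ : EReal)) u
      = ((B * max 0 ((⨆ i, |u i|) - lam) : ℝ) : EReal) := by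
  classical
  set S := ⨆ i, |u i| with hS
  have hbdd : BddAbove (Set.range fun i : Fin n => |u i|) :=
    (Set.finite_range _).bddAbove
  have hSle : ∀ i, |u i| ≤ S := fun i => le_ciSup hbdd i
  have hS0 : 0 ≤ S := by
    rcases isEmpty_or_nonempty (Fin n) with h | h
    · simp [hS, Real.iSup_of_isEmpty]
    · exact le_trans (abs_nonneg _) (hSle (Classical.arbitrary _))
  have inner_eq : ∀ α : Euc n, (inner ℝ u α : ℝ) = ∑ i, u i * α i := by
    intro α
    simp [PiLp.inner_apply, RCLike.inner_apply, mul_comm]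
  -- real upper bound on the ball
  have hreal : ∀ α : Euc n, (∑ i, |α i|) ≤ B →
      (inner ℝ u α : ℝ) - lam * ∑ i, |α i| ≤ B * max 0 (S - lam) := by
    intro α hα
    set t := ∑ i, |α i| with ht
    have ht0 : 0 ≤ t := Finset.sum_nonneg fun i _ => abs_nonneg _
    have h1 : (inner ℝ u α : ℝ) ≤ S * t := by
      rw [inner_eq α, ht, Finset.mul_sum]
      refine Finset.sum_le_sum fun i _ => ?_
      calc u i * α i ≤ |u i * α i| := le_abs_self _
        _ = |u i| * |α i| := abs_mul _ _
        _ ≤ S * |α i| := mul_le_mul_of_nonneg_right (hSle i) (abs_nonneg _)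
    have h2 : S * t - lam * t ≤ max 0 (S - lam) * t := by
      have : S * t - lam * t = (S - lam) * t := by ring
      rw [this]
      exact mul_le_mul_of_nonneg_right (le_max_right _ _) ht0
    have h3 : max 0 (S - lam) * t ≤ max 0 (S - lam) * B :=
      mul_le_mul_of_nonneg_left hα (le_max_left _ _)
    linarith
  rw [econj]
  apply le_antisymm
  · refine iSup_le fun α => ?_
    by_cases hα : (∑ i, |α i|) ≤ B
    · simp only [hα, if_true]
      rw [← EReal.coe_sub]
      exact_mod_cast hreal α hα
    · simp only [hα, if_false]
      rw [EReal.sub_top]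
      exact bot_le
  · rcases le_or_gt S lam with hc | hc
    · have hmax : max 0 (S - lam) = 0 := max_eq_left (by linarith)
      rw [hmax, mul_zero]
      have h0 : ((0:ℝ) : EReal) ≤
          ((inner ℝ u (0 : Euc n) : ℝ) : EReal) -
            (if (∑ i, |(0 : Euc n) i|) ≤ B then
              ((lam * ∑ i, |(0 : Euc n) i| : ℝ) : EReal) else (⊤ : EReal)) := by
        have hz : ∀ i : Fin n, (0 : Euc n) i = 0 := fun i => rfl
        simp [hz, hB.le]
      exact le_trans h0 (le_iSup (fun β : Euc n =>
        ((inner ℝ u β : ℝ) : EReal) -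
          (if (∑ i, |β i|) ≤ B then ((lam * ∑ i, |β i| : ℝ) : EReal)
            else (⊤ : EReal))) (0 : Euc n))
    · -- S > lam ≥ 0, so nonempty and max attained
      have hne : Nonempty (Fin n) := by
        by_contra h
        rw [not_nonempty_iff] at h
        have : S = 0 := by simp [hS, Real.iSup_of_isEmpty]
        linarith
      obtain ⟨i₀, -, hi₀⟩ := Finset.exists_max_image Finset.univ
        (fun i => |u i|) (Finset.univ_nonempty)
      have hSeq : S = |u i₀| :=
        le_antisymm (ciSup_le fun j => hi₀ j (Finset.mem_univ j)) (hSle i₀)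
      set s : ℝ := if 0 ≤ u i₀ then B else -B with hs
      set α : Euc n := EuclideanSpace.single i₀ s with hα
      have hαj : ∀ j, α j = if j = i₀ then s else 0 := fun j =>
        EuclideanSpace.single_apply i₀ s j
      have habs : |s| = B := by
        rw [hs]; split_ifs <;> simp [abs_of_pos hB, abs_of_neg, hB.le, hB]
      have hsum : (∑ i, |α i|) = B := by
        rw [Finset.sum_eq_single i₀]
        · rw [hαj i₀]; simp [habs]
        · intro j _ hj; rw [hαj j, if_neg hj, abs_zero]
        · intro h; exact absurd (Finset.mem_univ i₀) h
      have hinner : (inner ℝ u α : ℝ) = B * |u i₀| := by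
        rw [inner_eq α, Finset.sum_eq_single i₀]
        · rw [hαj i₀, if_pos rfl, hs]
          split_ifs with h
          · rw [abs_of_nonneg h]; ring
          · rw [abs_of_neg (not_le.mp h)]; ring
        · intro j _ hj; rw [hαj j, if_neg hj, mul_zero]
        · intro h; exact absurd (Finset.mem_univ i₀) h
      have hmax : max 0 (S - lam) = S - lam := max_eq_right (by linarith)
      calc ((B * max 0 (S - lam) : ℝ) : EReal)
          = ((inner ℝ u α : ℝ) : EReal) -
            (if (∑ i, |α i|) ≤ B then ((lam * ∑ i, |α i| : ℝ) : EReal)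
              else (⊤ : EReal)) := by
            rw [if_pos (le_of_eq hsum), hsum, hinner, ← EReal.coe_sub,
              EReal.coe_eq_coe_iff, hmax, hSeq]
            ring
        _ ≤ _ := le_iSup (fun β : Euc n =>
            ((inner ℝ u β : ℝ) : EReal) -
              (if (∑ i, |β i|) ≤ B then ((lam * ∑ i, |β i| : ℝ) : EReal)
                else (⊤ : EReal))) α
end
end

section
/- Coordinate descent per-step improvement: consider D(α) := f(Aα) + Σᵢ gᵢ(αᵢ), with f (1/β)-smooth w.r.t. ‖·‖ and each gᵢ μ-strongly convex (μ ≥ 0; if μ = 0 assume each gᵢ has bounded support). Let the update pick coordinate i uniformly at random and exactly minimize D along coordinate i. Then for any s ∈ [0,1]: E[D(α) - D(α⁺)] ≥ (s/n)·G(α) - (s²/2)·F, where G(α) = Σᵢ(gᵢ*(-A_{:i}ᵀw) + gᵢ(αᵢ) + αᵢ·A_{:i}ᵀw) with w = ∇f(Aα), and F = (1/n)·Σᵢ ( (1/β)‖A_{:i}‖² - (1-s)μ/s )·(uᵢ - αᵢ)² with uᵢ ∈ ∂gᵢ*(-A_{:i}ᵀ w). -/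
open scoped BigOperators ENNReal
open MeasureTheory

noncomputable section

-- ### helper: forall-eps
lemma st_le_of_forall {a b : ℝ} (h : ∀ ε : ℝ, 0 < ε → a ≤ b + ε) : a ≤ b := by
  by_contra hc
  push_neg at hc
  have := h ((a - b)/2) (by linarith)
  linarith

-- ### real convexity from EConvex1
lemma st_convex_real {g : ℝ → EReal} (hb : ∀ x, g x ≠ ⊥) (hc : EConvex1 g)
    {x y gx gy : ℝ} (hx : g x = (gx : EReal)) (hy : g y = (gy : EReal)) {a b : ℝ}
    (ha : 0 ≤ a) (hb' : 0 ≤ b) (hab : a + b = 1) :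
    g (a*x + b*y) ≠ ⊤ ∧ (g (a*x+b*y)).toReal ≤ a*gx + b*gy := by
  have h := hc x y a b ha hb' hab
  rw [hx, hy] at h
  have he : (a : EReal) * (gx : EReal) + (b : EReal) * (gy : EReal)
      = ((a*gx + b*gy : ℝ) : EReal) := by
    rw [← EReal.coe_mul, ← EReal.coe_mul, ← EReal.coe_add]
  rw [he] at h
  have hnt : g (a*x + b*y) ≠ ⊤ := by
    intro htop
    rw [htop, top_le_iff] at h
    exact (EReal.coe_ne_top _) h
  refine ⟨hnt, ?_⟩
  have h1 := EReal.toReal_le_toReal h (hb _) (EReal.coe_ne_top _)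
  rw [EReal.toReal_coe] at h1
  exact h1

-- ### conjugate: lower bound
lemma st_conj_ge {g : ℝ → EReal} (y : ℝ) {x gx : ℝ} (hgx : g x = (gx : EReal)) :
    ((y*x - gx : ℝ) : EReal) ≤ econj1 g y := by
  have h := le_iSup (fun a => ((y*a : ℝ) : EReal) - g a) x
  rw [hgx] at h
  refine le_trans (le_of_eq ?_) h
  rw [EReal.coe_sub]

-- ### conjugate: upper bound
lemma st_conj_le {g : ℝ → EReal} (hb : ∀ x, g x ≠ ⊥) {y M : ℝ}
    (h : ∀ (x gx : ℝ), g x = (gx : EReal) → y*x - gx ≤ M) : econj1 g y ≤ (M : EReal) := by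
  apply iSup_le
  intro x
  by_cases hx : g x = ⊤
  · rw [hx, EReal.sub_top]
    exact bot_le
  · have hco : g x = (((g x).toReal : ℝ) : EReal) := (EReal.coe_toReal hx (hb x)).symm
    rw [hco, ← EReal.coe_sub]
    exact_mod_cast h x _ hco

-- ### conjugate equality at a subgradient point
lemma st_conj_at_subgrad {g : ℝ → EReal} (hb : ∀ x, g x ≠ ⊥) {z gz p : ℝ}
    (hgz : g z = (gz : EReal)) (hp : ESubgradAt1 g z p) :
    econj1 g p = ((p*z - gz : ℝ) : EReal) := by
  refine le_antisymm (st_conj_le hb ?_) (st_conj_ge p hgz)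
  intro x gx hgx
  have := hp x
  rw [hgz, hgx, ← EReal.coe_add] at this
  have hr : gz + p * (x - z) ≤ gx := by exact_mod_cast this
  nlinarith [hr]

-- ### quadratic conjugate bound from strong-convexity subgradient inequality
lemma st_conj_quad {g : ℝ → EReal} (hb : ∀ x, g x ≠ ⊥) {μ z gz p : ℝ} (hμ : 0 < μ)
    (hq : ∀ (x gx : ℝ), g x = (gx : EReal) → gz + p*(x-z) + μ/2*(x-z)^2 ≤ gx) (y' : ℝ) :
    econj1 g y' ≤ ((y'*z - gz + (y'-p)^2/(2*μ) : ℝ) : EReal) := by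
  apply st_conj_le hb
  intro x gx hgx
  have h1 := hq x gx hgx
  have h2 : (y'-p)*(x-z) - μ/2*(x-z)^2 ≤ (y'-p)^2/(2*μ) := by
    rw [le_div_iff₀ (by positivity : (0:ℝ) < 2*μ)]
    nlinarith [sq_nonneg ((y'-p) - μ*(x-z))]
  nlinarith [h1, h2]

-- ### supporting line lemma
lemma st_support_line {g : ℝ → EReal} (hb : ∀ x, g x ≠ ⊥) (hc : EConvex1 g)
    {x₁ c x₂ : ℝ} (h1 : x₁ < c) (h2 : c < x₂) (hf1 : g x₁ ≠ ⊤) (hf2 : g x₂ ≠ ⊤) :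
    g c ≠ ⊤ ∧ ∃ r, ESubgradAt1 g c r := by
  have hg1 : g x₁ = (((g x₁).toReal : ℝ) : EReal) := (EReal.coe_toReal hf1 (hb _)).symm
  have hg2 : g x₂ = (((g x₂).toReal : ℝ) : EReal) := (EReal.coe_toReal hf2 (hb _)).symm
  set g1 := (g x₁).toReal with hg1d
  set g2 := (g x₂).toReal with hg2d
  -- slope inequality
  have slope : ∀ (x gx z gz y gy : ℝ), x < z → z < y → g x = (gx : EReal) → g z = (gz : EReal) →
      g y = (gy : EReal) → (gz - gx)/(z-x) ≤ (gy - gz)/(y-z) := by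
    intro x gx z gz y gy hxz hzy hgx hgz hgy
    have hyx : (0:ℝ) < y - x := by linarith
    have ha : (0:ℝ) ≤ (y-z)/(y-x) := div_nonneg (by linarith) (by linarith)
    have hb2 : (0:ℝ) ≤ (z-x)/(y-x) := div_nonneg (by linarith) (by linarith)
    have hab : (y-z)/(y-x) + (z-x)/(y-x) = 1 := by field_simp; ring
    have hcomb := st_convex_real hb hc hgx hgy ha hb2 hab
    have hpt : (y-z)/(y-x)*x + (z-x)/(y-x)*y = z := by field_simp; ring
    rw [hpt] at hcomb
    have h3 : gz ≤ (y-z)/(y-x)*gx + (z-x)/(y-x)*gy := by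
      have := hcomb.2
      rw [hgz, EReal.toReal_coe] at this
      exact this
    have h4 : gz * (y-x) ≤ (y-z)*gx + (z-x)*gy := by
      calc gz * (y-x) ≤ ((y-z)/(y-x)*gx + (z-x)/(y-x)*gy) * (y-x) :=
            mul_le_mul_of_nonneg_right h3 hyx.le
        _ = (y-z)*gx + (z-x)*gy := by field_simp
    rw [div_le_div_iff₀ (by linarith) (by linarith)]
    nlinarith [h4]
  -- finiteness at c
  have haf : (0:ℝ) ≤ (x₂-c)/(x₂-x₁) := div_nonneg (by linarith) (by linarith)
  have hbf : (0:ℝ) ≤ (c-x₁)/(x₂-x₁) := div_nonneg (by linarith) (by linarith)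
  have habf : (x₂-c)/(x₂-x₁) + (c-x₁)/(x₂-x₁) = 1 := by
    have : x₂ - x₁ ≠ 0 := by linarith
    field_simp; ring
  have hcf := st_convex_real hb hc hg1 hg2 haf hbf habf
  have hptf : (x₂-c)/(x₂-x₁)*x₁ + (c-x₁)/(x₂-x₁)*x₂ = c := by
    have : x₂ - x₁ ≠ 0 := by linarith
    field_simp; ring
  rw [hptf] at hcf
  have hgc : g c = (((g c).toReal : ℝ) : EReal) := (EReal.coe_toReal hcf.1 (hb _)).symm
  set gc := (g c).toReal with hgcd
  refine ⟨hcf.1, ?_⟩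
  set S : Set ℝ := {p | ∃ (x gx : ℝ), x < c ∧ g x = (gx : EReal) ∧ p = (gc - gx)/(c-x)} with hS
  have hne : S.Nonempty := ⟨(gc - g1)/(c-x₁), x₁, g1, h1, hg1, rfl⟩
  have hbdd : BddAbove S := by
    refine ⟨(g2 - gc)/(x₂-c), ?_⟩
    rintro p ⟨x, gx, hxc, hgx, rfl⟩
    exact slope x gx c gc x₂ g2 hxc h2 hgx hgc hg2
  refine ⟨sSup S, ?_⟩
  intro y
  by_cases hy : g y = ⊤
  · rw [hy]; exact le_top
  · have hgy : g y = (((g y).toReal : ℝ) : EReal) := (EReal.coe_toReal hy (hb _)).symm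
    set gy := (g y).toReal with hgyd
    rcases lt_trichotomy y c with hlt | heq | hgt
    · have hmem : (gc - gy)/(c-y) ∈ S := ⟨y, gy, hlt, hgy, rfl⟩
      have hle := le_csSup hbdd hmem
      have hcy : (0:ℝ) < c - y := by linarith
      have hr : gc - gy ≤ sSup S * (c-y) := (div_le_iff₀ hcy).mp hle
      rw [hgc, hgy, ← EReal.coe_add]
      exact_mod_cast by nlinarith [hr]
    · subst heq
      rw [sub_self, mul_zero, EReal.coe_zero, add_zero]
    · have hub : ∀ p ∈ S, p ≤ (gy - gc)/(y-c) := by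
        rintro p ⟨x, gx, hxc, hgx, rfl⟩
        exact slope x gx c gc y gy hxc hgt hgx hgc hgy
      have hle := csSup_le hne hub
      have hyc : (0:ℝ) < y - c := by linarith
      have hr : sSup S * (y-c) ≤ gy - gc := (le_div_iff₀ hyc).mp hle
      rw [hgc, hgy, ← EReal.coe_add]
      exact_mod_cast by nlinarith [hr]

-- ### gradient inequality for convex differentiable functions
lemma st_grad_ineq {d : ℕ} {f : Euc d → ℝ} (hconv : ConvexOn ℝ Set.univ f)
    {f' : Euc d → Euc d} (hgrad : ∀ x, HasGradientAt f (f' x) x) (z y : Euc d) :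
    f z + (inner ℝ (f' z) (y - z) : ℝ) ≤ f y := by
  set ψ : ℝ → ℝ := fun t => f (z + t • (y - z)) with hψ
  have hψd : HasDerivAt ψ ((inner ℝ (f' (z + (0:ℝ) • (y-z))) (y-z) : ℝ)) 0 := by
    have hline : HasDerivAt (fun t : ℝ => z + t • (y - z)) (y - z) 0 := by
      simpa using ((hasDerivAt_id (0:ℝ)).smul_const (y - z)).const_add z
    have h := ((hgrad (z + (0:ℝ) • (y-z))).hasFDerivAt).comp_hasDerivAt 0 hline
    simpa [hψ, Function.comp_def] using h
  have hψc : ConvexOn ℝ Set.univ ψ := by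
    have h := hconv.comp_affineMap (AffineMap.lineMap z y)
    have heq : ψ = f ∘ (AffineMap.lineMap z y) := by
      funext t
      simp [hψ, AffineMap.lineMap_apply]
      congr 1
      module
    rw [heq]
    simpa using h
  have hs := hψc.le_slope_of_hasDerivAt (Set.mem_univ 0) (Set.mem_univ 1) one_pos hψd
  rw [slope_def_field] at hs
  have h0 : ψ 0 = f z := by simp [hψ]
  have h1 : ψ 1 = f y := by simp [hψ]
  rw [h0, h1] at hs
  have hin : (inner ℝ (f' (z + (0:ℝ) • (y-z))) (y-z) : ℝ) = (inner ℝ (f' z) (y - z) : ℝ) := by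
    norm_num
  rw [hin, show ((1:ℝ) - 0) = 1 from by norm_num, div_one] at hs
  linarith

-- ### main per-coordinate lemma
set_option maxHeartbeats 1000000 in
lemma st_key (g : ℝ → EReal) (hgp : EProper1 g) (hgc : EConvex1 g)
    (μ : ℝ) (hμ : 0 ≤ μ)
    (hgsc : ∀ x u, ESubgradAt1 g x u → ∀ y,
        g x + ((u * (y - x) + μ / 2 * (y - x) ^ 2 : ℝ) : EReal) ≤ g y)
    (hbs : μ = 0 → ∃ B, ∀ x, g x ≠ ⊤ → |x| ≤ B)
    (φ : ℝ → ℝ) (C : ℝ) (hC0 : 0 ≤ C)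
    (α₀ : ℝ) (hα : g α₀ ≠ ⊤) (w₀ : ℝ)
    (hA : ∀ t, φ (α₀ + t) ≤ φ α₀ + w₀ * t + C/2 * t^2)
    (m₀ d : ℝ)
    (hB : ∀ t, φ (m₀ + t) ≤ φ m₀ + d * t + C/2 * t^2)
    (hD : ∀ x, φ m₀ + d * (x - m₀) ≤ φ x)
    (hmin : ∀ c, ((φ m₀ : ℝ) : EReal) + g m₀ ≤ ((φ c : ℝ) : EReal) + g c)
    (s : ℝ) (hs0 : 0 ≤ s) (hs1 : s ≤ 1)
    (u : ℝ) (hu : ESubgradAt1 (econj1 g) (-w₀) u) :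
    s * ((econj1 g (-w₀)).toReal + (g α₀).toReal + α₀ * w₀)
      - s^2/2 * (C - (1-s)*μ/s) * (u - α₀)^2
    ≤ (φ α₀ + (g α₀).toReal) - (φ m₀ + (g m₀).toReal) := by
  obtain ⟨hbot, -⟩ := hgp
  set gα := (g α₀).toReal with hgαd
  clear_value gα
  have hgα : g α₀ = (gα : EReal) := by rw [hgαd]; exact (EReal.coe_toReal hα (hbot _)).symm
  -- g m₀ finite
  have hmt : g m₀ ≠ ⊤ := by
    intro ht
    have hmα := hmin α₀
    rw [ht, EReal.coe_add_top, hgα, ← EReal.coe_add, top_le_iff] at hmα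
    exact EReal.coe_ne_top _ hmα
  set gm := (g m₀).toReal with hgmd
  clear_value gm
  have hgm : g m₀ = (gm : EReal) := by rw [hgmd]; exact (EReal.coe_toReal hmt (hbot _)).symm
  -- real min
  have hminr : ∀ (z gz : ℝ), g z = (gz : EReal) → φ m₀ + gm ≤ φ z + gz := by
    intro z gz hz
    have h := hmin z
    rw [hgm, hz, ← EReal.coe_add, ← EReal.coe_add] at h
    exact_mod_cast h
  -- subgradient of g at m₀
  set p : ℝ := -d with hpd
  have hp : ESubgradAt1 g m₀ p := by
    intro y
    by_cases hy : g y = ⊤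
    · rw [hy]; exact le_top
    · have hgy : g y = (((g y).toReal : ℝ) : EReal) := (EReal.coe_toReal hy (hbot _)).symm
      set gy := (g y).toReal with hgyd
      have hre : ∀ t : ℝ, 0 < t → t ≤ 1 → gm - gy ≤ d*(y - m₀) + C/2*t*(y-m₀)^2 := by
        intro t ht ht1
        have hab : (1 - t) + t = 1 := by ring
        have hcv := st_convex_real hbot hgc hgm hgy (by linarith) (le_of_lt ht) hab
        have hpt : (1-t)*m₀ + t*y = m₀ + t*(y-m₀) := by ring
        rw [hpt] at hcv
        have hz : g (m₀ + t*(y-m₀)) = (((g (m₀ + t*(y-m₀))).toReal : ℝ) : EReal) :=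
          (EReal.coe_toReal hcv.1 (hbot _)).symm
        have h1 := hminr _ _ hz
        have h2 := hB (t*(y-m₀))
        have h3 := hcv.2
        have h4 : t * (gm - gy) ≤ t * (d*(y-m₀) + C/2*t*(y-m₀)^2) := by nlinarith [h1, h2, h3]
        exact le_of_mul_le_mul_left h4 ht
      have hfin : gm - gy ≤ d*(y-m₀) := by
        apply st_le_of_forall
        intro ε hε
        set K := C/2*(y-m₀)^2 with hK
        have hKnn : 0 ≤ K := by rw [hK]; positivity
        set t := min 1 (ε/(K+1)) with htd
        have ht0 : 0 < t := lt_min one_pos (div_pos hε (by linarith))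
        have ht1 : t ≤ 1 := min_le_left _ _
        have h5 := hre t ht0 ht1
        have h6 : C/2*t*(y-m₀)^2 ≤ ε := by
          have hm : t ≤ ε/(K+1) := min_le_right _ _
          calc C/2*t*(y-m₀)^2 = t*K := by rw [hK]; ring
            _ ≤ (ε/(K+1))*K := mul_le_mul_of_nonneg_right hm hKnn
            _ ≤ ε := by rw [div_mul_eq_mul_div, div_le_iff₀ (by linarith)]; nlinarith
        linarith
      rw [hgm, hgy, ← EReal.coe_add]
      exact_mod_cast (by rw [hpd]; linarith [hfin] : gm + p*(y-m₀) ≤ gy)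
  -- real strong convexity
  have hgsr : ∀ (z r : ℝ), ESubgradAt1 g z r → ∀ (gz : ℝ), g z = (gz:EReal) →
      ∀ (y gy : ℝ), g y = (gy:EReal) → gz + (r*(y-z) + μ/2*(y-z)^2) ≤ gy := by
    intro z r hr gz hgz y gy hgy
    have h := hgsc z r hr y
    rw [hgz, hgy, ← EReal.coe_add] at h
    exact_mod_cast h
  set v : ℝ := -w₀ with hv
  -- conjugate finite at v
  have hgstar_ne_top : econj1 g v ≠ ⊤ := by
    rcases eq_or_lt_of_le hμ with hμ0 | hμpos
    · obtain ⟨B, hb2⟩ := hbs hμ0.symm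
      have hle : econj1 g v ≤ (((|v - p| * B) + (p*m₀ - gm) : ℝ) : EReal) := by
        apply st_conj_le hbot
        intro x gx hgx
        have hsub := hp x
        rw [hgm, hgx, ← EReal.coe_add] at hsub
        have hsubr : gm + p*(x-m₀) ≤ gx := by exact_mod_cast hsub
        have hxb : |x| ≤ B := hb2 x (by rw [hgx]; exact EReal.coe_ne_top _)
        have h7 : (v-p)*x ≤ |v - p| * B := by
          calc (v-p)*x ≤ |(v-p)*x| := le_abs_self _
            _ = |v - p| * |x| := abs_mul _ _
            _ ≤ |v - p| * B := mul_le_mul_of_nonneg_left hxb (abs_nonneg _)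
        nlinarith [hsubr, h7]
      exact ne_top_of_le_ne_top (EReal.coe_ne_top _) hle
    · have hpr : ∀ (x gx : ℝ), g x = (gx:EReal) → gm + p*(x-m₀) + μ/2*(x-m₀)^2 ≤ gx :=
        fun x gx hgx => by have := hgsr m₀ p hp gm hgm x gx hgx; linarith
      exact ne_top_of_le_ne_top (EReal.coe_ne_top _) (st_conj_quad hbot hμpos hpr v)
  have hgstar_ne_bot : econj1 g v ≠ ⊥ := by
    intro hb3
    have h := st_conj_ge v hgα
    rw [hb3, le_bot_iff] at h
    exact EReal.coe_ne_bot _ h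
  set gv := (econj1 g v).toReal with hgvd
  clear_value gv
  have hgv : econj1 g v = (gv : EReal) := by rw [hgvd]; exact (EReal.coe_toReal hgstar_ne_top hgstar_ne_bot).symm
  have fen : ∀ (x gx : ℝ), g x = (gx:EReal) → v*x - gx ≤ gv := by
    intro x gx hgx
    have h := st_conj_ge v hgx
    rw [hgv] at h
    exact_mod_cast h
  have hur : ∀ (y M : ℝ), econj1 g y ≤ (M:EReal) → gv + u*(y - v) ≤ M := by
    intro y M hM
    have h := hu y
    rw [hgv, ← EReal.coe_add] at h
    exact_mod_cast le_trans h hM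
  have hT0 : φ m₀ + gm ≤ φ α₀ + gα := hminr α₀ gα hgα
  have hw : w₀ = -v := by rw [hv]; ring
  rcases eq_or_lt_of_le hs0 with hs0' | hspos
  · rw [← hs0']
    norm_num
    linarith
  rcases eq_or_ne u α₀ with huα | huα
  · -- u = α₀ case
    have h8 : (u - α₀)^2 = 0 := by rw [huα]; ring
    have hGp : 0 ≤ gv + gα - α₀*v := by have := fen α₀ gα hgα; linarith
    have hsubp : gv + u*(p - v) ≤ p*m₀ - gm := hur p _ (le_of_eq (st_conj_at_subgrad hbot hgm hp))
    have hDα := hD α₀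
    rw [h8, hw]
    have key1 : gv + gα - α₀*v ≤ (φ α₀ + gα) - (φ m₀ + gm) := by
      rw [huα, hpd] at hsubp
      nlinarith [hsubp, hDα]
    have hstep : s*(gv + gα + α₀ * -v) ≤ gv + gα - α₀*v := by
      nlinarith [mul_nonneg (by linarith : (0:ℝ) ≤ 1 - s) hGp]
    have hz : s^2/2 * (C - (1-s)*μ/s) * 0 = 0 := by ring
    rw [hz]
    linarith [key1, hstep]
  -- main case
  set δ := u - α₀ with hδ
  have hδne : δ ≠ 0 := by rw [hδ]; exact sub_ne_zero.mpr huα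
  have huu : u = α₀ + δ := by rw [hδ]; ring
  have core : ∀ σ : ℝ, 0 < σ → σ < 1 →
      σ*(gv + gα - α₀*v) - σ^2*C*δ^2/2 + σ*(1-σ)*μ*δ^2/2
        ≤ (φ α₀ + gα) - (φ m₀ + gm) := by
    intro σ hσ0 hσ1
    set c := α₀ + σ*δ with hcd
    have hsupp : g c ≠ ⊤ ∧ ∃ r, ESubgradAt1 g c r := by
      rcases lt_or_gt_of_ne hδne with hneg | hpos
      · have hcα : c < α₀ := by rw [hcd]; nlinarith
        have hex : ∃ x₂, g x₂ ≠ ⊤ ∧ x₂ < c := by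
          by_contra hcon
          push_neg at hcon
          have hub : econj1 g (v - 1) ≤ ((gv - c : ℝ) : EReal) := by
            apply st_conj_le hbot
            intro x gx hgx
            have h9 := fen x gx hgx
            have h10 : c ≤ x := hcon x (by rw [hgx]; exact EReal.coe_ne_top _)
            nlinarith [h9, h10]
          have h11 := hur (v-1) _ hub
          rw [hcd] at h11
          nlinarith [h11]
        obtain ⟨x₂, hx₂t, hx₂c⟩ := hex
        exact st_support_line hbot hgc hx₂c hcα hx₂t hα
      · have hcα : α₀ < c := by rw [hcd]; nlinarith
        have hex : ∃ x₂, g x₂ ≠ ⊤ ∧ c < x₂ := by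
          by_contra hcon
          push_neg at hcon
          have hub : econj1 g (v + 1) ≤ ((gv + c : ℝ) : EReal) := by
            apply st_conj_le hbot
            intro x gx hgx
            have h9 := fen x gx hgx
            have h10 : x ≤ c := hcon x (by rw [hgx]; exact EReal.coe_ne_top _)
            nlinarith [h9, h10]
          have h11 := hur (v+1) _ hub
          rw [hcd] at h11
          nlinarith [h11]
        obtain ⟨x₂, hx₂t, hx₂c⟩ := hex
        exact st_support_line hbot hgc hcα hx₂c hα hx₂t
    obtain ⟨hct, r, hr⟩ := hsupp
    set gc := (g c).toReal with hgcd
    clear_value gc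
    have hgcE : g c = (gc : EReal) := by rw [hgcd]; exact (EReal.coe_toReal hct (hbot _)).symm
    have hAc : φ c ≤ φ α₀ + w₀*(σ*δ) + C/2*(σ*δ)^2 := by rw [hcd]; exact hA (σ*δ)
    have hmc : φ m₀ + gm ≤ φ c + gc := hminr c gc hgcE
    have hCc : gc + r*(α₀-c) + μ/2*(α₀-c)^2 ≤ gα := by
      have := hgsr c r hr gc hgcE α₀ gα hgα; linarith
    have hgr := st_conj_at_subgrad hbot hgcE hr
    have hE : gv + u*(r-v) + μ*(u-c)^2/2 ≤ r*c - gc := by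
      rcases eq_or_lt_of_le hμ with hμ0 | hμpos
      · have h16 := hur r _ (le_of_eq hgr)
        rw [← hμ0]
        norm_num
        linarith [h16]
      · have hqr : ∀ (x gx : ℝ), g x = (gx:EReal) → gc + r*(x-c) + μ/2*(x-c)^2 ≤ gx :=
          fun x gx hgx => by have := hgsr c r hr gc hgcE x gx hgx; linarith
        have h12 := hur (r + μ*(u-c)) _ (st_conj_quad hbot hμpos hqr (r + μ*(u-c)))
        have h15 : ((r + μ*(u-c)) - r)^2/(2*μ) = μ*(u-c)^2/2 := by
          field_simp
          ring
        rw [h15] at h12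
        nlinarith [h12]
    have hC2 : (1-σ)*(gc + r*(α₀-c) + μ/2*(α₀-c)^2) ≤ (1-σ)*gα :=
      mul_le_mul_of_nonneg_left hCc (by linarith)
    have hE2 : σ*(gv + u*(r-v) + μ*(u-c)^2/2) ≤ σ*(r*c - gc) :=
      mul_le_mul_of_nonneg_left hE hσ0.le
    rw [hcd] at hC2 hE2 hAc hmc
    rw [huu] at hE2
    rw [hw] at hAc
    nlinarith [hC2, hE2, hAc, hmc]
  rw [hw]
  rcases lt_or_eq_of_le hs1 with hslt | hseq
  · have heq : s*(gv + gα + α₀*(-v)) - s^2/2*(C - (1-s)*μ/s)*δ^2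
        = s*(gv + gα - α₀*v) - s^2*C*δ^2/2 + s*(1-s)*μ*δ^2/2 := by
      field_simp
      ring
    rw [heq]
    exact core s hspos hslt
  · subst hseq
    set F : ℝ → ℝ := fun σ : ℝ => σ*(gv + gα - α₀*v) - σ^2*C*δ^2/2 + σ*(1-σ)*μ*δ^2/2 with hF
    have hcont : Continuous F := by rw [hF]; fun_prop
    have hlim := ((hcont.tendsto 1).mono_left nhdsWithin_le_nhds :
      Filter.Tendsto F (nhdsWithin 1 (Set.Iio 1)) (nhds (F 1)))
    have hev : ∀ᶠ σ in nhdsWithin (1:ℝ) (Set.Iio 1), F σ ≤ (φ α₀ + gα) - (φ m₀ + gm) := by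
      filter_upwards [Ioo_mem_nhdsLT (by norm_num : (0:ℝ) < 1)] with σ hσ
      exact core σ hσ.1 hσ.2
    have h17 := le_of_tendsto hlim hev
    have hF1 : F 1 = (gv + gα - α₀*v) - C*δ^2/2 := by rw [hF]; norm_num
    rw [hF1] at h17
    norm_num
    nlinarith [h17]


set_option maxHeartbeats 1000000 in
/-- coordinate descent per-step improvement: for
`D(α) = f(Σⱼ αⱼ aⱼ) + Σⱼ gⱼ(αⱼ)` with `f` `(1/β)`-smooth and each `gᵢ` `μ`-strongly
convex (bounded support if `μ = 0`), exact coordinate minimization `q i` of a uniformly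
random coordinate `i` satisfies, for any `s ∈ [0,1]` and `uᵢ ∈ ∂gᵢ*(-A_{:i}ᵀw)`:
`E[D(α) - D(α⁺)] ≥ (s/n) G(α) - (s²/2) F`. -/
theorem stmt18 {d n : ℕ} (hn : 0 < n) (a : Fin n → Euc d)
    (Nf : Euc d → ℝ) (hNf : IsNorm Nf)
    (f : Euc d → ℝ) (hconv : ConvexOn ℝ Set.univ f)
    (f' : Euc d → Euc d) (hgrad : ∀ x, HasGradientAt f (f' x) x)
    (β : ℝ) (hβ : 0 < β)
    (hsmooth : ∀ x y, f y ≤ f x + (inner ℝ (f' x) (y - x) : ℝ)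
        + 1 / (2 * β) * (Nf (y - x)) ^ 2)
    (g : Fin n → ℝ → EReal)
    (hgp : ∀ i, EProper1 (g i)) (hgc : ∀ i, EConvex1 (g i))
    (μ : ℝ) (hμ : 0 ≤ μ)
    (hgsc : ∀ i x u, ESubgradAt1 (g i) x u → ∀ y,
        g i x + ((u * (y - x) + μ / 2 * (y - x) ^ 2 : ℝ) : EReal) ≤ g i y)
    (hbs : μ = 0 → ∀ i, ∃ B, ∀ x, g i x ≠ ⊤ → |x| ≤ B)
    (α : Fin n → ℝ) (hα : ∀ i, g i (α i) ≠ ⊤)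
    (q : Fin n → Fin n → ℝ)
    (hq1 : ∀ i j, j ≠ i → q i j = α j)
    (hq2 : ∀ (i : Fin n) (c : ℝ),
      ((f (∑ j, q i j • a j) : ℝ) : EReal) + ∑ j, g j (q i j)
        ≤ ((f (∑ j, Function.update α i c j • a j) : ℝ) : EReal)
            + ∑ j, g j (Function.update α i c j))
    (s : ℝ) (hs0 : 0 ≤ s) (hs1 : s ≤ 1)
    (u : Fin n → ℝ)
    (hu : ∀ i, ESubgradAt1 (econj1 (g i))
        (-(inner ℝ (a i) (f' (∑ j, α j • a j)) : ℝ)) (u i)) :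
    s / (n : ℝ) * (∑ i, ((econj1 (g i)
            (-(inner ℝ (a i) (f' (∑ j, α j • a j)) : ℝ))).toReal
          + (g i (α i)).toReal
          + α i * (inner ℝ (a i) (f' (∑ j, α j • a j)) : ℝ)))
      - s ^ 2 / 2 * (1 / (n : ℝ)
          * ∑ i, (1 / β * (Nf (a i)) ^ 2 - (1 - s) * μ / s) * (u i - α i) ^ 2)
    ≤ 1 / (n : ℝ) * ∑ i,
        (((((f (∑ j, α j • a j) : ℝ) : EReal) + ∑ j, g j (α j))
          - (((f (∑ j, q i j • a j) : ℝ) : EReal) + ∑ j, g j (q i j))).toReal) := by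
  
  classical
  set X : Euc d := ∑ j, α j • a j with hX
  have coesum : ∀ (t : Finset (Fin n)) (F : Fin n → ℝ),
      ((∑ j ∈ t, F j : ℝ) : EReal) = ∑ j ∈ t, ((F j : ℝ) : EReal) := by
    intro t F
    exact map_sum (⟨⟨Real.toEReal, EReal.coe_zero⟩, EReal.coe_add⟩ : ℝ →+ EReal) F t
  have hbot : ∀ j x, g j x ≠ ⊥ := fun j => (hgp j).1
  set gA : Fin n → ℝ := fun j => (g j (α j)).toReal with hgAd
  have hgAe : ∀ j, g j (α j) = ((gA j : ℝ) : EReal) :=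
    fun j => (EReal.coe_toReal (hα j) (hbot j _)).symm
  set E : Fin n → ℝ := fun i => ∑ j ∈ Finset.univ.erase i, gA j with hEd
  have hEerase : ∀ i : Fin n, (∑ j ∈ Finset.univ.erase i, g j (α j)) = ((E i : ℝ) : EReal) := by
    intro i
    rw [hEd]
    dsimp only
    rw [coesum]
    exact Finset.sum_congr rfl (fun j _ => hgAe j)
  have hsumα : ∀ i : Fin n, (∑ j, g j (α j)) = ((gA i + E i : ℝ) : EReal) := by
    intro i
    rw [← Finset.sum_erase_add _ _ (Finset.mem_univ i), hEerase i, hgAe i,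
      ← EReal.coe_add]
    norm_cast
    ring
  have hqerase : ∀ i : Fin n,
      (∑ j ∈ Finset.univ.erase i, g j (q i j)) = ((E i : ℝ) : EReal) := by
    intro i
    rw [hEd]
    dsimp only
    rw [coesum]
    exact Finset.sum_congr rfl
      (fun j hj => by rw [hq1 i j (Finset.ne_of_mem_erase hj)]; exact hgAe j)
  have hupd : ∀ i, Function.update α i (α i) = α := fun i => Function.update_eq_self i α
  have hqfin : ∀ i, g i (q i i) ≠ ⊤ := by
    intro i ht
    have h := hq2 i (α i)
    rw [hupd i] at h
    have hsq : (∑ j, g j (q i j)) = ⊤ := by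
      rw [← Finset.sum_erase_add _ _ (Finset.mem_univ i), ht, hqerase i]
      exact EReal.coe_add_top _
    rw [hsq, EReal.add_top_of_ne_bot (EReal.coe_ne_bot _), hsumα i, ← EReal.coe_add,
      top_le_iff] at h
    exact EReal.coe_ne_top _ h
  set gQ : Fin n → ℝ := fun i => (g i (q i i)).toReal with hgQd
  have hgQe : ∀ i, g i (q i i) = ((gQ i : ℝ) : EReal) :=
    fun i => (EReal.coe_toReal (hqfin i) (hbot i _)).symm
  have hsumq : ∀ i, (∑ j, g j (q i j)) = ((gQ i + E i : ℝ) : EReal) := by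
    intro i
    rw [← Finset.sum_erase_add _ _ (Finset.mem_univ i), hqerase i, hgQe i, ← EReal.coe_add]
    norm_cast
    ring
  have hXsplit : ∀ i : Fin n, X = (∑ j ∈ Finset.univ.erase i, α j • a j) + α i • a i := by
    intro i
    rw [hX, ← Finset.sum_erase_add _ _ (Finset.mem_univ i)]
  have hsum_upd : ∀ (i : Fin n) (c : ℝ),
      (∑ j, Function.update α i c j • a j) = X + (c - α i) • a i := by
    intro i c
    rw [← Finset.sum_erase_add _ _ (Finset.mem_univ i)]
    have h1 : ∀ j ∈ Finset.univ.erase i, Function.update α i c j • a j = α j • a j :=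
      fun j hj => by rw [Function.update_of_ne (Finset.ne_of_mem_erase hj)]
    rw [Finset.sum_congr rfl h1, Function.update_self, hXsplit i, sub_smul]
    abel
  have hsum_q : ∀ i : Fin n, (∑ j, q i j • a j) = X + (q i i - α i) • a i := by
    intro i
    rw [← Finset.sum_erase_add _ _ (Finset.mem_univ i)]
    have h1 : ∀ j ∈ Finset.univ.erase i, q i j • a j = α j • a j :=
      fun j hj => by rw [hq1 i j (Finset.ne_of_mem_erase hj)]
    rw [Finset.sum_congr rfl h1, hXsplit i, sub_smul]
    abel
  -- per-coordinate bound
  have hper : ∀ i : Fin n,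
      s * ((econj1 (g i) (-(inner ℝ (a i) (f' X) : ℝ))).toReal + (g i (α i)).toReal
            + α i * (inner ℝ (a i) (f' X) : ℝ))
        - s^2/2 * (Nf (a i)^2/β - (1-s)*μ/s) * (u i - α i)^2
      ≤ (f X + gA i) - (f (X + (q i i - α i) • a i) + gQ i) := by
    intro i
    set φi : ℝ → ℝ := fun c => f (X + (c - α i) • a i) with hφi
    set Ci : ℝ := Nf (a i)^2/β with hCi
    have hCi0 : 0 ≤ Ci := div_nonneg (sq_nonneg _) hβ.le
    set w0 : ℝ := (inner ℝ (a i) (f' X) : ℝ) with hw0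
    have hsm : ∀ (z : Euc d) (t : ℝ),
        f (z + t • a i) ≤ f z + t * (inner ℝ (a i) (f' z) : ℝ) + Ci/2*t^2 := by
      intro z t
      have h := hsmooth z (z + t • a i)
      rw [add_sub_cancel_left] at h
      have hin : (inner ℝ (f' z) (t • a i) : ℝ) = t * (inner ℝ (a i) (f' z) : ℝ) := by
        rw [real_inner_smul_right, real_inner_comm]
      have hN : Nf (t • a i) = |t| * Nf (a i) := hNf.2.2.1 t (a i)
      rw [hin, hN] at h
      have he : 1/(2*β)*(|t| * Nf (a i))^2 = Ci/2*t^2 := by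
        rw [hCi, mul_pow, sq_abs]
        field_simp
      rw [he] at h
      exact h
    have hAi : ∀ t, φi (α i + t) ≤ φi (α i) + w0 * t + Ci/2*t^2 := by
      intro t
      have e1 : φi (α i) = f X := by rw [hφi]; simp
      have e0 : X + ((α i + t) - α i) • a i = X + t • a i := by
        rw [add_sub_cancel_left]
      rw [e1, hφi]
      dsimp only
      rw [e0]
      linarith [hsm X t]
    set Xq : Euc d := X + (q i i - α i) • a i with hXq
    set di : ℝ := (inner ℝ (a i) (f' Xq) : ℝ) with hdi
    have e3 : φi (q i i) = f Xq := by rw [hφi, hXq]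
    have hBi : ∀ t, φi (q i i + t) ≤ φi (q i i) + di * t + Ci/2*t^2 := by
      intro t
      have e2 : X + ((q i i + t) - α i) • a i = Xq + t • a i := by
        rw [hXq, show (q i i + t) - α i = (q i i - α i) + t from by ring, add_smul]
        abel
      rw [e3, hφi]
      dsimp only
      rw [e2]
      linarith [hsm Xq t]
    have hDi : ∀ x, φi (q i i) + di * (x - q i i) ≤ φi x := by
      intro x
      have e4 : X + (x - α i) • a i = Xq + (x - q i i) • a i := by
        rw [hXq, show x - α i = (q i i - α i) + (x - q i i) from by ring, add_smul]
        abel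
      have h := st_grad_ineq hconv hgrad Xq (Xq + (x - q i i) • a i)
      rw [add_sub_cancel_left] at h
      have hin : (inner ℝ (f' Xq) ((x - q i i) • a i) : ℝ) = di * (x - q i i) := by
        rw [real_inner_smul_right, real_inner_comm, hdi, mul_comm]
      rw [hin] at h
      rw [e3, show φi x = f (Xq + (x - q i i) • a i) from by rw [hφi]; dsimp only; rw [e4]]
      exact h
    have hmini : ∀ c : ℝ, ((φi (q i i) : ℝ) : EReal) + g i (q i i)
        ≤ ((φi c : ℝ) : EReal) + g i c := by
      intro c
      have h := hq2 i c
      rw [hsum_q i, hsum_upd i c] at h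
      rw [← Finset.sum_erase_add _ _ (Finset.mem_univ i), hqerase i] at h
      rw [show (∑ j, g j (Function.update α i c j))
          = (∑ j ∈ Finset.univ.erase i, g j (Function.update α i c j))
            + g i (Function.update α i c i) from
        (Finset.sum_erase_add _ _ (Finset.mem_univ i)).symm] at h
      have he2 : (∑ j ∈ Finset.univ.erase i, g j (Function.update α i c j))
          = ((E i : ℝ) : EReal) := by
        rw [hEd]
        dsimp only
        rw [coesum]
        exact Finset.sum_congr rfl
          (fun j hj => by rw [Function.update_of_ne (Finset.ne_of_mem_erase hj)]; exact hgAe j)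
      rw [he2, Function.update_self] at h
      have hcanc : ∀ (x y : EReal) (z : ℝ),
          (x + ((z:EReal) + y)) + ((-z : ℝ) : EReal) = x + y := by
        intro x y z
        have hz : ((z:EReal) + ((-z : ℝ) : EReal)) = 0 := by
          rw [← EReal.coe_add]
          norm_num
        calc (x + ((z:EReal) + y)) + ((-z:ℝ):EReal)
            = (x + y) + ((z:EReal) + ((-z:ℝ):EReal)) := by abel
          _ = x + y := by rw [hz, add_zero]
      have h2 := add_le_add_left h (((-E i : ℝ)) : EReal)
      rw [hcanc, hcanc] at h2
      rw [hφi]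
      dsimp only
      rw [← hXq]
      exact h2
    have hk := st_key (g i) (hgp i) (hgc i) μ hμ (hgsc i) (fun h0 => hbs h0 i)
      φi Ci hCi0 (α i) (hα i) w0 hAi (q i i) di hBi hDi hmini s hs0 hs1 (u i) (hu i)
    have e1 : φi (α i) = f X := by rw [hφi]; simp
    rw [e1, e3] at hk
    exact hk
  -- assemble
  set G : Fin n → ℝ := fun i => (econj1 (g i) (-(inner ℝ (a i) (f' X) : ℝ))).toReal
      + (g i (α i)).toReal + α i * (inner ℝ (a i) (f' X) : ℝ) with hG
  set T : Fin n → ℝ := fun i => (f X + gA i) - (f (X + (q i i - α i) • a i) + gQ i) with hT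
  have hRHS : (∑ i, (((((f X : ℝ) : EReal) + ∑ j, g j (α j))
      - (((f (∑ j, q i j • a j) : ℝ) : EReal) + ∑ j, g j (q i j))).toReal))
      = ∑ i, T i := by
    apply Finset.sum_congr rfl
    intro i _
    rw [hsumα i, hsumq i, hsum_q i, ← EReal.coe_add, ← EReal.coe_add, ← EReal.coe_sub,
      EReal.toReal_coe, hT]
    dsimp only
    ring
  rw [hRHS]
  have hFs : (∑ i, (1 / β * (Nf (a i)) ^ 2 - (1 - s) * μ / s) * (u i - α i) ^ 2)
      = ∑ i, (Nf (a i)^2/β - (1-s)*μ/s) * (u i - α i)^2 := by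
    apply Finset.sum_congr rfl
    intro i _
    ring_nf
  rw [hFs]
  have h1 : ∑ i, (s * G i - s^2/2 * ((Nf (a i)^2/β - (1-s)*μ/s) * (u i - α i)^2))
      ≤ ∑ i, T i := by
    apply Finset.sum_le_sum
    intro i _
    have := hper i
    rw [hG]
    dsimp only
    linarith [this]
  have h2 : ∑ i, (s * G i - s^2/2 * ((Nf (a i)^2/β - (1-s)*μ/s) * (u i - α i)^2))
      = s * ∑ i, G i - s^2/2 * ∑ i, (Nf (a i)^2/β - (1-s)*μ/s) * (u i - α i)^2 := by
    rw [Finset.sum_sub_distrib, ← Finset.mul_sum, ← Finset.mul_sum]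
  have hn' : (0:ℝ) < (n:ℝ) := by exact_mod_cast hn
  have h3 : (0:ℝ) ≤ 1/(n:ℝ) := by positivity
  calc s / (n:ℝ) * (∑ i, G i)
        - s^2/2 * (1/(n:ℝ) * ∑ i, (Nf (a i)^2/β - (1-s)*μ/s) * (u i - α i)^2)
      = 1/(n:ℝ) * (s * ∑ i, G i
          - s^2/2 * ∑ i, (Nf (a i)^2/β - (1-s)*μ/s) * (u i - α i)^2) := by ring
    _ ≤ 1/(n:ℝ) * ∑ i, T i := by
        apply mul_le_mul_of_nonneg_left _ h3
        rw [← h2]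
        exact h1
end
end
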